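/- arXiv:2011.01835 — 7 statements merged into one kernel-verified Lean document; each statement's English description precedes it below -/
import Mathlib

section
/- Let Λ be a ⋆-approximate lattice in a locally compact second countable group G and let V ⊆ G be any neighbourhood of the identity. Then there is a compact subset K ⊆ G such that VΛK = G. -/
open scoped Pointwise ENNReal NNReal
open MeasureTheory

/-- The space of closed subsets of a topological space. -/
def CFSp (G : Type*) [TopologicalSpace G] := {A : Set G // IsClosed A}

namespace CFSp

variable {G : Type*} [TopologicalSpace G]

/-- The Chabauty–Fell topology on the space of closed subsets. -/
instance : TopologicalSpace (CFSp G) :=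
  TopologicalSpace.generateFrom
    ({s | ∃ K : Set G, IsCompact K ∧ s = {C : CFSp G | C.1 ∩ K = ∅}} ∪
     {s | ∃ V : Set G, IsOpen V ∧ s = {C : CFSp G | (C.1 ∩ V).Nonempty}})

instance : MeasurableSpace (CFSp G) := borel (CFSp G)

instance : BorelSpace (CFSp G) := ⟨rfl⟩

/-- Left translation action of a topological group on its closed subsets. -/
noncomputable instance [Group G] [IsTopologicalGroup G] : SMul G (CFSp G) :=
  ⟨fun g X => ⟨g • X.1, X.2.smul g⟩⟩

/-- Constructor. -/
def mk (A : Set G) (h : IsClosed A) : CFSp G := ⟨A, h⟩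

end CFSp

/-- The extended invariant hull. -/
def extHull {G : Type*} [TopologicalSpace G] [Group G] (X₀ : Set G) : Set (CFSp G) :=
  {X : CFSp G | X.1⁻¹ * X.1 ⊆ closure (X₀⁻¹ * X₀)}

/-- The empty set as a closed subset. -/
def emptyCF (G : Type*) [TopologicalSpace G] : CFSp G := ⟨∅, isClosed_empty⟩

/-- Approximate subgroup. -/
def IsApproxSubgroup {G : Type*} [Group G] (Λ : Set G) : Prop :=
  (1 : G) ∈ Λ ∧ Λ⁻¹ = Λ ∧ ∃ F : Set G, F.Finite ∧ Λ * Λ ⊆ F * Λ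

/-- Uniformly discrete subset: the identity is isolated in X⁻¹X. -/
def UniformlyDiscrete {G : Type*} [TopologicalSpace G] [Group G] (X : Set G) : Prop :=
  ∃ V ∈ nhds (1 : G), V ∩ (X⁻¹ * X) ⊆ {1}

/-- A proper `G`-invariant Borel probability measure concentrated on `Ω ⊆ 𝒞(G)`. -/
def IsInvariantProperProb {G : Type*} [TopologicalSpace G] [Group G] [IsTopologicalGroup G]
    (Ω : Set (CFSp G)) (ν : Measure (CFSp G)) : Prop :=
  IsProbabilityMeasure ν ∧ ν Ωᶜ = 0 ∧ ν {emptyCF G} = 0 ∧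
    ∀ g : G, Measure.map (fun X : CFSp G => g • X) ν = ν

/-- ⋆-approximate lattice. -/
def IsStarApproxLattice {G : Type*} [TopologicalSpace G] [Group G] [IsTopologicalGroup G]
    (Λ : Set G) : Prop :=
  IsApproxSubgroup Λ ∧ UniformlyDiscrete Λ ∧
    ∃ ν : Measure (CFSp G), IsInvariantProperProb (extHull Λ) ν

/-- Ergodicity of a measure on `𝒞(G)` under the translation action. -/
def ErgodicMeas {G : Type*} [TopologicalSpace G] [Group G] [IsTopologicalGroup G]
    (ν : Measure (CFSp G)) : Prop :=
  ∀ s : Set (CFSp G), MeasurableSet s → (∀ g : G, (fun X : CFSp G => g • X) ⁻¹' s = s) →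
    ν s = 0 ∨ ν sᶜ = 0

/-- Commensurability of subsets of a group. -/
def AreCommensurable {G : Type*} [Group G] (X Y : Set G) : Prop :=
  ∃ F : Set G, F.Finite ∧ X ⊆ F * Y ∧ Y ⊆ F * X

/-- Finite local complexity: `X⁻¹X` is locally finite. -/
def FiniteLocalComplexity {G : Type*} [TopologicalSpace G] [Group G] (X : Set G) : Prop :=
  ∀ K : Set G, IsCompact K → ((X⁻¹ * X) ∩ K).Finite
section MyAux

variable {G : Type*} [Group G] [TopologicalSpace G] [IsTopologicalGroup G]

lemma myCoeSmul (g : G) (X : CFSp G) : (g • X).1 = g • X.1 := rfl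

lemma mySmulInter (g : G) (A U : Set G) :
    ((g • A) ∩ U).Nonempty ↔ (A ∩ g⁻¹ • U).Nonempty := by
  constructor
  · rintro ⟨y, hyA, hyU⟩
    rcases hyA with ⟨x, hx, rfl⟩
    refine ⟨x, hx, ?_⟩
    simpa [Set.mem_smul_set_iff_inv_smul_mem] using hyU
  · rintro ⟨x, hxA, hxU⟩
    refine ⟨g • x, Set.smul_mem_smul_set hxA, ?_⟩
    simpa [Set.mem_smul_set_iff_inv_smul_mem] using hxU

lemma myIsOpenHitting (U : Set G) (hU : IsOpen U) :
    IsOpen {X : CFSp G | (X.1 ∩ U).Nonempty} :=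
  TopologicalSpace.GenerateOpen.basic _ (Or.inr ⟨U, hU, rfl⟩)

lemma myContinuousSmul (g : G) : Continuous (fun X : CFSp G => g • X) := by
  rw [continuous_def]
  intro s hs
  have hs' : TopologicalSpace.GenerateOpen
      ({s | ∃ K : Set G, IsCompact K ∧ s = {C : CFSp G | C.1 ∩ K = ∅}} ∪
       {s | ∃ V : Set G, IsOpen V ∧ s = {C : CFSp G | (C.1 ∩ V).Nonempty}}) s := hs
  clear hs
  induction hs' with
  | basic u hu =>
      rcases hu with ⟨K, hK, rfl⟩ | ⟨U, hU, rfl⟩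
      · have hpre : (fun X : CFSp G => g • X) ⁻¹' {C : CFSp G | C.1 ∩ K = ∅}
            = {C : CFSp G | C.1 ∩ g⁻¹ • K = ∅} := by
          ext X
          simp only [Set.mem_preimage, Set.mem_setOf_eq, myCoeSmul,
            ← Set.not_nonempty_iff_eq_empty]
          exact not_congr (mySmulInter g X.1 K)
        rw [hpre]
        have hKc : IsCompact (g⁻¹ • K) := by
          have h2 := hK.image (continuous_const_smul g⁻¹)
          rwa [Set.image_smul] at h2
        exact TopologicalSpace.GenerateOpen.basic _ (Or.inl ⟨g⁻¹ • K, hKc, rfl⟩)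
      · have hpre : (fun X : CFSp G => g • X) ⁻¹' {C : CFSp G | (C.1 ∩ U).Nonempty}
            = {C : CFSp G | (C.1 ∩ g⁻¹ • U).Nonempty} := by
          ext X
          simp only [Set.mem_preimage, Set.mem_setOf_eq, myCoeSmul]
          exact mySmulInter g X.1 U
        rw [hpre]
        exact TopologicalSpace.GenerateOpen.basic _ (Or.inr ⟨g⁻¹ • U, hU.smul g⁻¹, rfl⟩)
  | univ => rw [Set.preimage_univ]; exact isOpen_univ
  | inter u v hu hv ihu ihv => rw [Set.preimage_inter]; exact ihu.inter ihv
  | sUnion T hT ih =>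
      rw [Set.preimage_sUnion]
      exact isOpen_biUnion fun t ht => ih t ht

end MyAux

/-- A ⋆-approximate lattice `Λ` in a locally compact second countable group `G` is
"bi-syndetic": for every neighbourhood `V` of the identity there is a compact `K` with
`VΛK = G`. -/
theorem statement2 {G : Type*} [Group G] [TopologicalSpace G] [IsTopologicalGroup G]
    [LocallyCompactSpace G] [SecondCountableTopology G]
    (Λ : Set G) (hΛ : IsStarApproxLattice Λ) (V : Set G) (hV : V ∈ nhds (1 : G)) :
    ∃ K : Set G, IsCompact K ∧ V * Λ * K = Set.univ := by
  classical
  obtain ⟨⟨h1Λ, hsymm, F, hFfin, hFmul⟩, -, ν, hνprob, hνhull, hνempty, hνinv⟩ := hΛ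
  haveI := hνprob
  -- a compact neighbourhood inside V
  obtain ⟨s, hs_nhds, hsV, hs_comp⟩ := local_compact_nhds hV
  set V₀ : Set G := interior s ∩ (interior s)⁻¹ with hV₀def
  have hV₀open : IsOpen V₀ := isOpen_interior.inter isOpen_interior.inv
  have h1int : (1 : G) ∈ interior s := mem_interior_iff_mem_nhds.2 hs_nhds
  have hV₀mem : (1 : G) ∈ V₀ := ⟨h1int, by simpa using h1int⟩
  have hV₀symm : V₀⁻¹ = V₀ := by
    rw [hV₀def, Set.inter_inv, inv_inv, Set.inter_comm]
  have hV₀s : V₀ ⊆ s := fun x hx => interior_subset hx.1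
  have hV₀V : V₀ ⊆ V := fun x hx => hsV (hV₀s hx)
  have hV₀inv : ∀ {x : G}, x ∈ V₀ → x⁻¹ ∈ V₀ := by
    intro x hx; rw [← hV₀symm]; exact Set.inv_mem_inv.2 hx
  -- the window sets
  set W : G → Set (CFSp G) := fun a => {X : CFSp G | (X.1 ∩ a • V₀).Nonempty} with hWdef
  have hWmeas : ∀ a, MeasurableSet (W a) :=
    fun a => (myIsOpenHitting _ (hV₀open.smul a)).measurableSet
  have hWpre : ∀ g a : G, (fun X : CFSp G => g • X) ⁻¹' (W a) = W (g⁻¹ * a) := by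
    intro g a
    ext X
    simp only [hWdef, Set.mem_preimage, Set.mem_setOf_eq, myCoeSmul]
    rw [mySmulInter, smul_smul]
  have hWconst : ∀ a, ν (W a) = ν (W 1) := by
    intro a
    have hmap := hνinv a⁻¹
    have h1 : ν ((fun X : CFSp G => a⁻¹ • X) ⁻¹' (W 1)) = ν (W 1) := by
      rw [← Measure.map_apply ((myContinuousSmul a⁻¹).measurable) (hWmeas 1), hmap]
    rw [hWpre a⁻¹ 1] at h1
    simpa using h1
  set c := ν (W 1) with hcdef
  -- c is positive
  have hcne : c ≠ 0 := by
    intro h0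
    obtain ⟨D, hDc, hDd⟩ := TopologicalSpace.exists_countable_dense G
    have hcover : ({emptyCF G}ᶜ : Set (CFSp G)) ⊆ ⋃ d ∈ D, W d := by
      intro X hX
      have hXne : X.1.Nonempty := by
        rcases Set.eq_empty_or_nonempty X.1 with he | hne
        · exact absurd (Subtype.ext he : X = emptyCF G) hX
        · exact hne
      obtain ⟨x, hx⟩ := hXne
      obtain ⟨d, hdD, hdO⟩ := hDd.exists_mem_open (hV₀open.smul x)
        ⟨x, ⟨(1:G), hV₀mem, by simp⟩⟩
      rcases hdO with ⟨v, hv, rfl⟩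
      refine Set.mem_biUnion hdD ⟨x, hx, ⟨v⁻¹, hV₀inv hv, ?_⟩⟩
      simp [smul_eq_mul, mul_assoc]
    have hz : ν (⋃ d ∈ D, W d) = 0 := by
      refine (MeasureTheory.measure_biUnion_null_iff hDc).2 ?_
      intro d _
      rw [hWconst d]
      exact h0
    have hb := measure_union_le (μ := ν) {emptyCF G} ({emptyCF G}ᶜ)
    rw [Set.union_compl_self, measure_univ, hνempty, zero_add] at hb
    have hcon : (1 : ℝ≥0∞) ≤ 0 := hb.trans ((measure_mono hcover).trans hz.le)
    simp at hcon
  set Q : Set G := closure (Λ⁻¹ * Λ) with hQdef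
  -- pair lemma
  have hpair : ∀ a h : G, ν (W a ∩ W h) ≠ 0 → a⁻¹ * h ∈ V₀ * Q * V₀ := by
    intro a h hν0
    have hex : ((W a ∩ W h) ∩ extHull Λ).Nonempty := by
      by_contra hemp
      rw [Set.not_nonempty_iff_eq_empty] at hemp
      have hsub : W a ∩ W h ⊆ (extHull Λ)ᶜ := fun X hX hX' =>
        Set.eq_empty_iff_forall_notMem.1 hemp X ⟨hX, hX'⟩
      exact hν0 (measure_mono_null hsub hνhull)
    obtain ⟨X, ⟨hXa, hXh⟩, hXhull⟩ := hex
    obtain ⟨x, hxX, hxa⟩ := hXa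
    obtain ⟨y, hyX, hyh⟩ := hXh
    rcases hxa with ⟨u, hu, hux⟩
    rcases hyh with ⟨w, hw, hwy⟩
    have hux' : a * u = x := hux
    have hwy' : h * w = y := hwy
    have hq : x⁻¹ * y ∈ Q := hXhull (Set.mul_mem_mul (Set.inv_mem_inv.2 hxX) hyX)
    have heq : a⁻¹ * h = u * (x⁻¹ * y) * w⁻¹ := by
      rw [← hux', ← hwy']; group
    rw [heq]
    exact Set.mul_mem_mul (Set.mul_mem_mul hu hq) (hV₀inv hw)
  -- separated families have bounded cardinality
  have hcardle : ∀ A : Finset G,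
      (∀ a ∈ A, ∀ b ∈ A, a ≠ b → ν (W a ∩ W b) = 0) → (A.card : ℝ≥0∞) * c ≤ 1 := by
    intro A hA
    have hsum : ν (⋃ a ∈ A, W a) = ∑ a ∈ A, ν (W a) := by
      refine MeasureTheory.measure_biUnion_finset₀ ?_
        (fun b _ => (hWmeas b).nullMeasurableSet)
      intro a ha b hb hab
      exact hA a ha b hb hab
    have hsum2 : ∑ a ∈ A, ν (W a) = (A.card : ℝ≥0∞) * c := by
      rw [Finset.sum_congr rfl (fun a _ => hWconst a), Finset.sum_const, nsmul_eq_mul]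
    calc (A.card : ℝ≥0∞) * c = ν (⋃ a ∈ A, W a) := by rw [hsum, hsum2]
      _ ≤ ν Set.univ := measure_mono (Set.subset_univ _)
      _ = 1 := measure_univ
  obtain ⟨N, hN⟩ := ENNReal.exists_nat_gt (ENNReal.inv_ne_top.2 hcne)
  have hbdd : ∀ A : Finset G,
      (∀ a ∈ A, ∀ b ∈ A, a ≠ b → ν (W a ∩ W b) = 0) → A.card ≤ N := by
    intro A hA
    have h1 := hcardle A hA
    have hcne' : c ≠ ∞ := measure_ne_top ν _
    have h2 : (A.card : ℝ≥0∞) ≤ c⁻¹ := by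
      calc (A.card : ℝ≥0∞) = (A.card : ℝ≥0∞) * (c * c⁻¹) := by
            rw [ENNReal.mul_inv_cancel hcne hcne', mul_one]
        _ = ((A.card : ℝ≥0∞) * c) * c⁻¹ := by ring
        _ ≤ 1 * c⁻¹ := mul_le_mul_left h1 _
        _ = c⁻¹ := one_mul _
    have h3 : (A.card : ℝ≥0∞) < (N : ℝ≥0∞) := lt_of_le_of_lt h2 hN
    exact le_of_lt (by exact_mod_cast h3)
  -- a maximal separated family
  set Cards : Set ℕ :=
    {k | ∃ A : Finset G, (∀ a ∈ A, ∀ b ∈ A, a ≠ b → ν (W a ∩ W b) = 0) ∧ A.card = k}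
    with hCardsdef
  have hC0 : (0 : ℕ) ∈ Cards := ⟨∅, fun a ha => absurd ha (Finset.notMem_empty a), rfl⟩
  have hCb : BddAbove Cards := ⟨N, fun k hk => by
    obtain ⟨A, hA, rfl⟩ := hk; exact hbdd A hA⟩
  obtain ⟨A, hAsep, hAcard⟩ : sSup Cards ∈ Cards := Nat.sSup_mem ⟨0, hC0⟩ hCb
  have hAmax : ∀ h : G, ∃ a ∈ A, ν (W a ∩ W h) ≠ 0 := by
    intro h
    by_contra hcon
    push_neg at hcon
    have hhA : h ∉ A := by
      intro hh
      refine hcne ?_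
      have hz := hcon h hh
      rw [Set.inter_self, hWconst h] at hz
      exact hz
    have hsep' : ∀ a ∈ insert h A, ∀ b ∈ insert h A, a ≠ b → ν (W a ∩ W b) = 0 := by
      intro a ha b hb hab
      rcases Finset.mem_insert.1 ha with rfl | ha'
      · rcases Finset.mem_insert.1 hb with rfl | hb'
        · exact absurd rfl hab
        · rw [Set.inter_comm]; exact hcon b hb'
      · rcases Finset.mem_insert.1 hb with rfl | hb'
        · exact hcon a ha'
        · exact hAsep a ha' b hb' hab
    have hmem : (insert h A).card ∈ Cards := ⟨_, hsep', rfl⟩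
    have hle := le_csSup hCb hmem
    rw [Finset.card_insert_of_notMem hhA, hAcard] at hle
    omega
  -- inclusion Λ⁻¹ * Λ ⊆ Λ * F⁻¹
  have hQF : Λ⁻¹ * Λ ⊆ Λ * F⁻¹ := by
    rw [hsymm]
    intro z hz
    have hz' : z⁻¹ ∈ Λ * Λ := by
      rcases hz with ⟨p, hp, q, hq, rfl⟩
      refine ⟨q⁻¹, ?_, p⁻¹, ?_, by group⟩
      · rw [← hsymm]; exact Set.inv_mem_inv.2 hq
      · rw [← hsymm]; exact Set.inv_mem_inv.2 hp
    rcases hFmul hz' with ⟨f, hf, l, hl, hfl⟩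
    refine ⟨l⁻¹, ?_, f⁻¹, Set.inv_mem_inv.2 hf, ?_⟩
    · rw [← hsymm]; exact Set.inv_mem_inv.2 hl
    · have := congrArg Inv.inv hfl
      rw [mul_inv_rev, inv_inv] at this
      exact this
  -- closure is contained in the V₀-thickening
  have hclos : Q ⊆ (Λ⁻¹ * Λ) * V₀ := by
    intro x hx
    obtain ⟨y, hyO, hyT⟩ := mem_closure_iff.1 hx (x • V₀) (hV₀open.smul x)
      ⟨(1:G), hV₀mem, by simp⟩
    rcases hyO with ⟨v, hv, hvy⟩
    have hvy' : x * v = y := hvy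
    exact ⟨y, hyT, v⁻¹, hV₀inv hv, by rw [← hvy']; group⟩
  -- the compact set
  refine ⟨F⁻¹ * s * s * (↑A : Set G)⁻¹, ?_, ?_⟩
  · have hF' : (F⁻¹ : Set G).Finite := hFfin.inv
    have hA' : ((↑A : Set G)⁻¹).Finite := A.finite_toSet.inv
    exact ((hF'.isCompact.mul hs_comp).mul hs_comp).mul hA'.isCompact
  · apply Set.eq_univ_of_univ_subset
    intro g _
    obtain ⟨a, haA, hν0⟩ := hAmax g⁻¹
    have hm := hpair a g⁻¹ hν0
    rcases hm with ⟨t, ht, v₃, hv₃, heq1t⟩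
    rcases ht with ⟨v₁, hv₁, q, hq, heq4t⟩
    have heq4 : v₁ * q = t := heq4t
    have heq1 : (v₁ * q) * v₃ = a⁻¹ * g⁻¹ := by rw [heq4]; exact heq1t
    have hqi : q⁻¹ ∈ Q := by
      have hmem : q⁻¹ ∈ Q⁻¹ := Set.inv_mem_inv.2 hq
      rwa [hQdef, inv_closure, mul_inv_rev, inv_inv] at hmem
    rcases hclos hqi with ⟨r, hr, v₄, hv₄, heq2t⟩
    rcases hQF hr with ⟨l, hl, f, hf, heq3t⟩
    have heq2 : r * v₄ = q⁻¹ := heq2t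
    have heq3 : l * f = r := heq3t
    -- g = v₃⁻¹ * q⁻¹ * v₁⁻¹ * a⁻¹  and  q⁻¹ = (l * f) * v₄
    have hginv : g⁻¹ = a * ((v₁ * q) * v₃) := by
      rw [heq1]; group
    have hg : g = v₃⁻¹ * q⁻¹ * v₁⁻¹ * a⁻¹ := by
      have h5 := congrArg Inv.inv hginv
      rw [inv_inv] at h5
      rw [h5]; group
    have hqinv : q⁻¹ = (l * f) * v₄ := by
      rw [← heq3] at heq2
      exact heq2.symm
    refine ⟨v₃⁻¹ * l, Set.mul_mem_mul (hV₀V (hV₀inv hv₃)) hl,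
      ((f * v₄) * v₁⁻¹) * a⁻¹,
      Set.mul_mem_mul (Set.mul_mem_mul (Set.mul_mem_mul hf (hV₀s hv₄))
        (hV₀s (hV₀inv hv₁))) ?_, ?_⟩
    · exact Set.inv_mem_inv.2 haA
    · rw [hg, hqinv]; group
end

section
/- Let Λ be a ⋆-approximate lattice in a locally compact second countable group G. Then there is a Borel subset B ⊆ G with finite Haar measure such that BΛ² = G and B⁻¹B ∩ Λ² = {e}. -/
open scoped Pointwise ENNReal NNReal
open MeasureTheory

namespace S11

open Set Function TopologicalSpace MeasureTheory
open scoped Pointwise ENNReal Classical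

/-! ### Generic counting helper -/

noncomputable def cnt' {α : Type*} (S : Set α) : ℝ≥0∞ := ∑' x : α, S.indicator 1 x

variable {α : Type*} {β : Type*}

lemma cnt'_eq_encard (S : Set α) : cnt' S = (S.encard : ℝ≥0∞) := by
  rw [cnt', ← tsum_subtype S (1 : α → ℝ≥0∞)]
  simpa using ENNReal.tsum_set_one_eq S

lemma cnt'_empty : cnt' (∅ : Set α) = 0 := by simp [cnt'_eq_encard]

lemma cnt'_mono {S T : Set α} (h : S ⊆ T) : cnt' S ≤ cnt' T := by
  rw [cnt'_eq_encard, cnt'_eq_encard]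
  exact_mod_cast ENat.toENNReal_le.2 (Set.encard_mono h)

lemma cnt'_le_one {S : Set α} (h : S.Subsingleton) : cnt' S ≤ 1 := by
  rw [cnt'_eq_encard]
  have h1 : S.encard ≤ 1 := Set.encard_le_one_iff.2 (fun a b ha hb => h ha hb)
  calc (S.encard : ℝ≥0∞) ≤ ((1 : ℕ∞) : ℝ≥0∞) := by exact_mod_cast ENat.toENNReal_le.2 h1
    _ = 1 := by simp

lemma cnt'_nat_or_top (S : Set α) : (∃ n : ℕ, cnt' S = n) ∨ cnt' S = ⊤ := by
  rw [cnt'_eq_encard]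
  rcases S.finite_or_infinite with h | h
  · obtain ⟨n, hn⟩ := Set.Finite.exists_encard_eq_coe h
    exact Or.inl ⟨n, by rw [hn]; simp⟩
  · right; rw [Set.encard_eq_top_iff.2 h]; simp

lemma cnt'_image {f : α → β} {S : Set α} (hf : Set.InjOn f S) : cnt' (f '' S) = cnt' S := by
  rw [cnt'_eq_encard, cnt'_eq_encard, Set.InjOn.encard_image hf]

lemma le_cnt'_of_inj {k : ℕ} {S : Set α} (f : Fin k → α) (hf : Function.Injective f)
    (hmem : ∀ j, f j ∈ S) : (k : ℝ≥0∞) ≤ cnt' S := by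
  rw [cnt'_eq_encard]
  have h1 : (Set.range f).encard = k := by
    rw [Set.encard_eq_coe_toFinset_card]
    simp [Set.toFinset_range, Finset.card_image_of_injective _ hf]
  have h2 : (k : ℕ∞) ≤ S.encard := h1 ▸ Set.encard_mono (Set.range_subset_iff.2 hmem)
  exact_mod_cast ENat.toENNReal_le.2 h2

lemma exists_inj_of_le_cnt' {k : ℕ} {S : Set α} (h : (k : ℝ≥0∞) ≤ cnt' S) :
    ∃ f : Fin k → α, Function.Injective f ∧ ∀ j, f j ∈ S := by
  rw [cnt'_eq_encard] at h
  have h' : (k : ℕ∞) ≤ S.encard := by exact_mod_cast ENat.toENNReal_le.1 (by exact_mod_cast h)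
  obtain ⟨t, hts, htk⟩ := Set.exists_subset_encard_eq h'
  have htfin : t.Finite := Set.finite_of_encard_eq_coe htk
  have hcard : htfin.toFinset.card = k := by
    have := htfin.encard_eq_coe_toFinset_card
    rw [htk] at this; exact_mod_cast this.symm
  let e := htfin.toFinset.equivFin
  refine ⟨fun j => (e.symm (Fin.cast hcard.symm j) : α), ?_, ?_⟩
  · intro i j hij
    have h2 : e.symm (Fin.cast hcard.symm i) = e.symm (Fin.cast hcard.symm j) :=
      Subtype.ext hij
    have h3 := e.symm.injective h2
    exact Fin.val_injective (by simpa using congrArg Fin.val h3)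
  · intro j
    have := (e.symm (Fin.cast hcard.symm j)).2
    rw [Set.Finite.mem_toFinset] at this
    exact hts this

lemma cnt'_iUnion {ι : Type*} {S : ι → Set α} (hd : Pairwise (Function.onFun Disjoint S)) :
    cnt' (⋃ i, S i) = ∑' i, cnt' (S i) := by
  have key : ∀ x, (⋃ i, S i).indicator (1 : α → ℝ≥0∞) x = ∑' i, (S i).indicator 1 x := by
    intro x
    by_cases hx : x ∈ ⋃ i, S i
    · obtain ⟨i, hi⟩ := Set.mem_iUnion.1 hx
      rw [Set.indicator_of_mem hx, tsum_eq_single i ?_]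
      · rw [Set.indicator_of_mem hi]
      · intro j hj
        refine Set.indicator_of_notMem (fun hxj => ?_) _
        exact Set.disjoint_left.1 (hd hj) hxj hi
    · rw [Set.indicator_of_notMem hx]
      have : ∀ i, (S i).indicator (1 : α → ℝ≥0∞) x = 0 := fun i =>
        Set.indicator_of_notMem (fun h => hx (Set.mem_iUnion.2 ⟨i, h⟩)) _
      simp [this]
  rw [cnt']
  simp_rw [key]
  rw [ENNReal.tsum_comm]
  rfl

lemma cnt'_union_le (S T : Set α) : cnt' (S ∪ T) ≤ cnt' S + cnt' T := by
  rw [cnt', cnt', cnt', ← ENNReal.tsum_add]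
  refine Summable.tsum_le_tsum (fun x => ?_) ENNReal.summable ENNReal.summable
  by_cases hx : x ∈ S ∪ T
  · rw [Set.indicator_of_mem hx]
    rcases hx with hx | hx
    · rw [Set.indicator_of_mem hx]; exact le_add_right le_rfl
    · rw [Set.indicator_of_mem (s := T) hx]; exact le_add_left le_rfl
  · rw [Set.indicator_of_notMem hx]; exact zero_le

lemma ennreal_repr {a : ℝ≥0∞} (h : (∃ n : ℕ, a = n) ∨ a = ⊤) :
    a = ∑' k : ℕ, (if (k : ℝ≥0∞) + 1 ≤ a then 1 else 0) := by
  rcases h with ⟨n, rfl⟩ | rfl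
  · have hiff : ∀ k : ℕ, ((k : ℝ≥0∞) + 1 ≤ n ↔ k < n) := by
      intro k
      rw [show ((k : ℝ≥0∞) + 1 = ((k + 1 : ℕ) : ℝ≥0∞)) by push_cast; ring, Nat.cast_le]
      exact Nat.succ_le_iff
    rw [tsum_eq_sum (s := Finset.range n) (fun b hb => by
      rw [if_neg]; rw [hiff b]; simpa using hb)]
    rw [Finset.sum_congr rfl (fun b hb => by rw [if_pos ((hiff b).2 (Finset.mem_range.1 hb))])]
    simp
  · have : ∀ k : ℕ, (if (k : ℝ≥0∞) + 1 ≤ (⊤ : ℝ≥0∞) then (1:ℝ≥0∞) else 0) = 1 := by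
      intro k; rw [if_pos le_top]
    simp_rw [this]
    exact (ENNReal.tsum_const_eq_top_of_ne_zero one_ne_zero).symm


/-! ### The inseparability subgroup -/

section NN

variable {G : Type*} [Group G] [TopologicalSpace G] [IsTopologicalGroup G]

/-- The closure of the trivial subgroup. -/
def NN (G : Type*) [Group G] [TopologicalSpace G] [IsTopologicalGroup G] : Subgroup G :=
  (⊥ : Subgroup G).topologicalClosure

lemma NN_coe : ((NN G : Subgroup G) : Set G) = closure ({1} : Set G) :=
  Subgroup.coe_topologicalClosure_bot G

lemma closure_singleton_eq (g : G) :
    closure ({g} : Set G) = (fun x => g * x) '' closure ({1} : Set G) := by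
  have := (Homeomorph.mulLeft g).image_closure ({1} : Set G)
  simp only [Homeomorph.coe_mulLeft] at this
  rw [this]
  congr 1
  simp

lemma mem_closure_singleton_self (x n : G) (hn : n ∈ (NN G : Set G)) :
    x ∈ closure ({x * n} : Set G) := by
  rw [closure_singleton_eq (x * n)]
  refine ⟨n⁻¹, ?_, by group⟩
  rw [← NN_coe]
  exact (NN G).inv_mem hn

lemma sat_open {U : Set G} (hU : IsOpen U) {x : G} (hx : x ∈ U) {n : G}
    (hn : n ∈ (NN G : Set G)) : x * n ∈ U := by
  obtain ⟨y, hyU, hy⟩ := mem_closure_iff.1 (mem_closure_singleton_self x n hn) U hU hx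
  rw [Set.mem_singleton_iff] at hy
  rwa [hy] at hyU

lemma NN_subset_nhds {U : Set G} (hU : U ∈ nhds (1 : G)) : (NN G : Set G) ⊆ U := by
  intro n hn
  have h1 : (1 : G) ∈ closure ({n} : Set G) := by
    have := mem_closure_singleton_self (1 : G) n hn
    simpa using this
  obtain ⟨y, hyU, hy⟩ := mem_closure_iff.1 h1 (interior U) isOpen_interior
    (mem_interior_iff_mem_nhds.2 hU)
  rw [Set.mem_singleton_iff] at hy
  exact interior_subset (hy ▸ hyU)

lemma NN_isCompact [LocallyCompactSpace G] : IsCompact ((NN G : Subgroup G) : Set G) := by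
  obtain ⟨C, hC, hCn⟩ := exists_compact_mem_nhds (1 : G)
  exact hC.of_isClosed_subset (NN_coe (G := G) ▸ isClosed_closure) (NN_subset_nhds hCn)

lemma sat_meas [MeasurableSpace G] [BorelSpace G] {B : Set G} (hB : MeasurableSet B) :
    ∀ x ∈ B, ∀ n ∈ (NN G : Set G), x * n ∈ B := by
  have hB' : MeasurableSet[MeasurableSpace.generateFrom {s : Set G | IsOpen s}] B := by
    have h2 : MeasurableSet[borel G] B := BorelSpace.measurable_eq (α := G) ▸ hB
    exact h2
  refine MeasurableSpace.generateFrom_induction {s : Set G | IsOpen s}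
    (fun s _ => ∀ x ∈ s, ∀ n ∈ (NN G : Set G), x * n ∈ s) ?_ ?_ ?_ ?_ B hB'
  · intro t ht _ x hx n hn
    exact sat_open ht hx hn
  · intro x hx; exact absurd hx (Set.notMem_empty x)
  · intro t _ ht x hx n hn hmem
    exact hx (by simpa using ht _ hmem _ ((NN G).inv_mem hn))
  · intro s _ hs x hx n hn
    obtain ⟨i, hi⟩ := Set.mem_iUnion.1 hx
    exact Set.mem_iUnion.2 ⟨i, hs i _ hi _ hn⟩

end NN


/-! ### Context: a uniformly discrete approximate subgroup -/

structure Ctx (G : Type*) [Group G] [TopologicalSpace G] [IsTopologicalGroup G] where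
  Λ : Set G
  V : Set G
  W : Set G
  hVo : IsOpen V
  hV1 : (1 : G) ∈ V
  hVΛ : V ∩ (Λ * Λ) ⊆ {1}
  hWo : IsOpen W
  hW1 : (1 : G) ∈ W
  hWV : W * W⁻¹ ⊆ V
  hWV' : W⁻¹ * W ⊆ V
  hΛ1 : (1 : G) ∈ Λ
  hΛinv : Λ⁻¹ = Λ
  F : Set G
  hFfin : F.Finite
  hFΛ : Λ * Λ ⊆ F * Λ

namespace Ctx

variable {G : Type*} [Group G] [TopologicalSpace G] [IsTopologicalGroup G] (c : Ctx G)

lemma W_subset_V : c.W ⊆ c.V := by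
  intro w hw
  have : w = w * (1 : G)⁻¹ := by group
  rw [this]
  exact c.hWV (Set.mul_mem_mul hw (by simpa using c.hW1))

lemma sep_finite {S : Set G} (hsep : ∀ x ∈ S, ∀ y ∈ S, x⁻¹ * y ∈ c.V → x = y)
    {K : Set G} (hK : IsCompact K) : (S ∩ K).Finite := by
  have hmem : ∀ x : G, x ∈ x • c.W := fun x => ⟨1, c.hW1, mul_one x⟩
  have hcov : K ⊆ ⋃ x ∈ K, x • c.W := fun x hx => Set.mem_biUnion hx (hmem x)
  obtain ⟨t, hts, htfin, hcov'⟩ := hK.elim_finite_subcover_image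
    (fun x _ => c.hWo.smul x) hcov
  have hsub : S ∩ K ⊆ ⋃ x ∈ t, S ∩ (x • c.W) := by
    intro y ⟨hyS, hyK⟩
    obtain ⟨x, hxt, hyx⟩ := Set.mem_iUnion₂.1 (hcov' hyK)
    exact Set.mem_iUnion₂.2 ⟨x, hxt, hyS, hyx⟩
  refine Set.Finite.subset (htfin.biUnion (fun x _ => ?_)) hsub
  refine Set.Subsingleton.finite (fun y hy z hz => ?_)
  obtain ⟨w, hw, hwy⟩ := hy.2
  obtain ⟨w', hw', hwz⟩ := hz.2
  refine hsep y hy.1 z hz.1 ?_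
  have : y⁻¹ * z = w⁻¹ * w' := by
    rw [← hwy, ← hwz]; simp [smul_eq_mul, mul_assoc]
  rw [this]
  exact c.hWV' (Set.mul_mem_mul (Set.inv_mem_inv.2 hw) hw')

lemma lam_sep : ∀ x ∈ c.Λ, ∀ y ∈ c.Λ, x⁻¹ * y ∈ c.V → x = y := by
  intro x hx y hy hv
  have hxinv : x⁻¹ ∈ c.Λ := by rw [← c.hΛinv]; exact Set.inv_mem_inv.2 hx
  have hxy : x⁻¹ * y ∈ c.Λ * c.Λ := Set.mul_mem_mul hxinv hy
  have h1 : x⁻¹ * y = 1 := c.hVΛ ⟨hv, hxy⟩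
  exact (inv_mul_eq_one.1 h1)

lemma lam_finite {K : Set G} (hK : IsCompact K) : (c.Λ ∩ K).Finite :=
  c.sep_finite c.lam_sep hK

lemma lam_subset_lam2 : c.Λ ⊆ c.Λ * c.Λ := fun x hx => ⟨1, c.hΛ1, x, hx, one_mul x⟩

lemma one_mem_lam2 : (1 : G) ∈ c.Λ * c.Λ := c.lam_subset_lam2 c.hΛ1

lemma lam2_inv : ∀ x ∈ c.Λ * c.Λ, x⁻¹ ∈ c.Λ * c.Λ := by
  rintro _ ⟨a, ha, b, hb, rfl⟩
  rw [mul_inv_rev]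
  refine Set.mul_mem_mul ?_ ?_ <;> rw [← c.hΛinv] <;> exact Set.inv_mem_inv.2 ‹_›

lemma lam2_finite {K : Set G} (hK : IsCompact K) : ((c.Λ * c.Λ) ∩ K).Finite := by
  have hsub : (c.Λ * c.Λ) ∩ K ⊆ ⋃ f ∈ c.F, f • (c.Λ ∩ (f⁻¹ • K)) := by
    intro z ⟨hz2, hzK⟩
    obtain ⟨f, hf, l, hl, rfl⟩ := c.hFΛ hz2
    refine Set.mem_biUnion hf ⟨l, ⟨hl, ?_⟩, rfl⟩
    exact ⟨f * l, hzK, by simp only [smul_eq_mul]; group⟩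
  refine Set.Finite.subset (c.hFfin.biUnion (fun f _ => ?_)) hsub
  exact (c.lam_finite ((hK.smul f⁻¹))).smul_set

lemma lam_countable [SecondCountableTopology G] : c.Λ.Countable := by
  have hsub : c.Λ ⊆ ⋃ t ∈ countableBasis G, {x | x ∈ c.Λ ∧ x ∈ t ∧ t ⊆ x • c.W} := by
    intro x hx
    obtain ⟨t, ht, hxt, hsub⟩ := (isBasis_countableBasis G).exists_subset_of_mem_open
      (⟨1, c.hW1, mul_one x⟩ : x ∈ x • c.W) (c.hWo.smul x)
    exact Set.mem_biUnion ht ⟨hx, hxt, hsub⟩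
  refine Set.Countable.mono hsub ?_
  refine Set.Countable.biUnion (countable_countableBasis G) (fun t _ => ?_)
  refine Set.Subsingleton.countable (fun x hx y hy => ?_)
  obtain ⟨hxΛ, hxt, htx⟩ := hx
  obtain ⟨hyΛ, hyt, hty⟩ := hy
  obtain ⟨w, hw, hwy⟩ := htx hyt
  refine (c.lam_sep x hxΛ y hyΛ ?_).symm ▸ rfl
  have : x⁻¹ * y = w := by rw [← hwy]; simp [smul_eq_mul]
  rw [this]
  exact c.W_subset_V hw

lemma lam2_countable [SecondCountableTopology G] : (c.Λ * c.Λ).Countable := by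
  rw [← Set.image2_mul]
  exact Set.Countable.image2 c.lam_countable c.lam_countable _

lemma closure_lam2 [LocallyCompactSpace G] :
    closure (c.Λ * c.Λ) = (c.Λ * c.Λ) * (NN G : Set G) := by
  apply Set.Subset.antisymm
  · intro v hv
    obtain ⟨C, hC, hCv⟩ := exists_compact_mem_nhds v
    have hfin := c.lam2_finite hC
    by_contra hout
    have hncl : ∀ l ∈ (c.Λ * c.Λ) ∩ C, v ∉ closure ({l} : Set G) := by
      intro l hl hvl
      rw [closure_singleton_eq l] at hvl
      obtain ⟨n, hn, rfl⟩ := hvl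
      exact hout (Set.mul_mem_mul hl.1 (by rw [NN_coe]; exact hn))
    set O := interior C ∩ ⋂ l ∈ (c.Λ * c.Λ) ∩ C, (closure ({l} : Set G))ᶜ with hO
    have hOopen : IsOpen O := isOpen_interior.inter
      (hfin.isOpen_biInter (fun l _ => (isClosed_closure).isOpen_compl))
    have hvO : v ∈ O := ⟨mem_interior_iff_mem_nhds.2 hCv,
      Set.mem_biInter (fun l hl => hncl l hl)⟩
    obtain ⟨z, hzO, hz2⟩ := mem_closure_iff.1 hv O hOopen hvO
    have hzC : z ∈ (c.Λ * c.Λ) ∩ C := ⟨hz2, interior_subset hzO.1⟩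
    exact (Set.mem_iInter₂.1 hzO.2 z hzC) (subset_closure rfl)
  · rintro _ ⟨l, hl, n, hn, rfl⟩
    have h1 : l * n ∈ closure ({l} : Set G) := by
      rw [closure_singleton_eq l]
      exact ⟨n, by rw [← NN_coe]; exact hn, rfl⟩
    exact closure_mono (Set.singleton_subset_iff.2 hl) h1

lemma V_cap_lam2N : ∀ v ∈ c.V, v ∈ (c.Λ * c.Λ) * (NN G : Set G) → v ∈ (NN G : Set G) := by
  rintro _ hvV ⟨l, hl, n, hn, rfl⟩
  have hlV : l ∈ c.V := by
    have := sat_open c.hVo hvV ((NN G).inv_mem hn)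
    simpa [mul_assoc] using this
  have h1 : l = 1 := c.hVΛ ⟨hlV, hl⟩
  rw [h1]
  simpa using hn

lemma exists_basis_enum (G : Type*) [TopologicalSpace G] [SecondCountableTopology G] :
    ∃ e : ℕ → Set G, (∀ n, IsOpen (e n)) ∧ ∀ t ∈ countableBasis G, ∃ n, e n = t := by
  have hc : (insert ∅ (countableBasis G)).Countable :=
    (countable_countableBasis G).insert ∅
  obtain ⟨f, hf⟩ := hc.exists_eq_range ⟨∅, Set.mem_insert _ _⟩
  refine ⟨f, fun n => ?_, fun t ht => ?_⟩
  · have hn : f n ∈ insert ∅ (countableBasis G) := by rw [hf]; exact Set.mem_range_self n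
    rcases Set.mem_insert_iff.1 hn with h | h
    · rw [h]; exact isOpen_empty
    · exact isOpen_of_mem_countableBasis h
  · have : t ∈ Set.range f := by rw [← hf]; exact Set.mem_insert_of_mem _ ht
    obtain ⟨n, hn⟩ := this
    exact ⟨n, hn⟩

section Greedy

variable {G : Type*} [Group G] [TopologicalSpace G] [IsTopologicalGroup G]
  [SecondCountableTopology G] [MeasurableSpace G] [BorelSpace G] (c : Ctx G)

lemma exists_greedy :
    ∃ B : Set G, MeasurableSet B ∧ B * (c.Λ * c.Λ) = Set.univ ∧
      (∀ x ∈ B, ∀ y ∈ B, x⁻¹ * y ∈ c.Λ * c.Λ → x = y) ∧ B.Nonempty := by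
  obtain ⟨e, heo, hec⟩ := exists_basis_enum G
  set Δ := c.Λ * c.Λ with hΔ
  set A : ℕ → Set G := fun n => if (e n)⁻¹ * (e n) ⊆ c.V then e n else ∅ with hA
  have hAopen : ∀ n, IsOpen (A n) := by
    intro n; rw [hA]
    by_cases h : (e n)⁻¹ * (e n) ⊆ c.V
    · simpa [h] using heo n
    · simp [h]
  have hAsep : ∀ n, (A n)⁻¹ * (A n) ⊆ c.V := by
    intro n; rw [hA]
    by_cases h : (e n)⁻¹ * (e n) ⊆ c.V
    · simpa [h] using h
    · simp [h]
  have hAcov : ∀ g : G, ∃ n, g ∈ A n := by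
    intro g
    obtain ⟨t, ht, hgt, hsub⟩ := (isBasis_countableBasis G).exists_subset_of_mem_open
      (⟨1, c.hW1, mul_one g⟩ : g ∈ g • c.W) (c.hWo.smul g)
    obtain ⟨n, hn⟩ := hec t ht
    have hsep : (e n)⁻¹ * (e n) ⊆ c.V := by
      rw [hn]
      rintro _ ⟨a, ha, b, hb, rfl⟩
      obtain ⟨w, hw, hwa⟩ := hsub (Set.mem_inv.1 ha)
      obtain ⟨w', hw', hwb⟩ := hsub hb
      simp only [smul_eq_mul] at hwa hwb
      have hab : a * b = w⁻¹ * w' := by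
        have h1 : a = (g * w)⁻¹ := by rw [hwa]; group
        rw [h1, ← hwb]; group
      show a * b ∈ c.V
      rw [hab]
      exact c.hWV' (Set.mul_mem_mul (Set.inv_mem_inv.2 hw) hw')
    refine ⟨n, ?_⟩
    rw [hA]; simp only [if_pos hsep]
    rw [hn]; exact hgt
  have hΔc : Δ.Countable := c.lam2_countable
  haveI := hΔc.to_subtype
  set B : ℕ → Set G := fun n =>
    Nat.rec (motive := fun _ => Set G) ∅ (fun m Bm => Bm ∪ (A m \ (Bm * Δ))) n with hB
  have hBsucc : ∀ n, B (n+1) = B n ∪ (A n \ (B n * Δ)) := fun n => rfl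
  have hBzero : B 0 = (∅ : Set G) := rfl
  have hBmono : Monotone B := monotone_nat_of_le_succ (fun n => by
    rw [hBsucc]; exact Set.subset_union_left)
  have hBmeas : ∀ n, MeasurableSet (B n) := by
    intro n; induction n with
    | zero => rw [hBzero]; exact MeasurableSet.empty
    | succ m ih =>
      rw [hBsucc]
      refine ih.union ((hAopen m).measurableSet.diff ?_)
      have hmul : B m * Δ = ⋃ d : Δ, (fun x => x * (d : G)⁻¹) ⁻¹' (B m) := by
        ext x
        simp only [Set.mem_iUnion, Set.mem_preimage]
        constructor
        · rintro ⟨b, hb, d, hd, rfl⟩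
          exact ⟨⟨d, hd⟩, by simpa using hb⟩
        · rintro ⟨⟨d, hd⟩, hx⟩
          exact ⟨x * d⁻¹, hx, d, hd, by group⟩
      rw [hmul]
      exact MeasurableSet.iUnion (fun d => (measurable_mul_const (d : G)⁻¹) ih)
  have hBsep : ∀ n, ∀ x ∈ B n, ∀ y ∈ B n, x⁻¹ * y ∈ Δ → x = y := by
    intro n; induction n with
    | zero => intro x hx; rw [hBzero] at hx; exact absurd hx (Set.notMem_empty x)
    | succ m ih =>
      intro x hx y hy hxy
      rw [hBsucc] at hx hy
      rcases hx with hx | hx <;> rcases hy with hy | hy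
      · exact ih x hx y hy hxy
      · exact absurd (⟨x, hx, x⁻¹ * y, hxy, by group⟩ : y ∈ B m * Δ) hy.2
      · exact absurd (⟨y, hy, (x⁻¹ * y)⁻¹, c.lam2_inv _ hxy, by group⟩ : x ∈ B m * Δ) hx.2
      · have hV : x⁻¹ * y ∈ c.V :=
          hAsep m (Set.mul_mem_mul (Set.inv_mem_inv.2 hx.1) hy.1)
        exact inv_mul_eq_one.1 (c.hVΛ ⟨hV, hxy⟩)
  have hcov : (⋃ n, B n) * Δ = Set.univ := by
    refine Set.eq_univ_of_forall (fun g => ?_)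
    obtain ⟨n, hgn⟩ := hAcov g
    by_cases hg : g ∈ B n * Δ
    · exact Set.mul_subset_mul (Set.subset_iUnion B n) subset_rfl hg
    · have hgB : g ∈ B (n+1) := by rw [hBsucc]; exact Or.inr ⟨hgn, hg⟩
      exact ⟨g, Set.mem_iUnion.2 ⟨n+1, hgB⟩, 1, c.one_mem_lam2, mul_one g⟩
  refine ⟨⋃ n, B n, MeasurableSet.iUnion hBmeas, hcov, ?_, ?_⟩
  · intro x hx y hy hxy
    obtain ⟨m, hxm⟩ := Set.mem_iUnion.1 hx
    obtain ⟨n, hyn⟩ := Set.mem_iUnion.1 hy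
    exact hBsep (max m n) x (hBmono (le_max_left m n) hxm) y
      (hBmono (le_max_right m n) hyn) hxy
  · have : (1 : G) ∈ (⋃ n, B n) * Δ := hcov ▸ Set.mem_univ 1
    obtain ⟨b, hb, d, _, _⟩ := this
    exact ⟨b, hb⟩

end Greedy

end Ctx


/-! ### Chabauty–Fell space lemmas -/

section CF

variable {G : Type*} [Group G] [TopologicalSpace G] [IsTopologicalGroup G]

lemma smul_CF_coe (g : G) (X : CFSp G) : (g • X).1 = g • X.1 := rfl

lemma isOpen_hitting {U : Set G} (hU : IsOpen U) :
    IsOpen {C : CFSp G | (C.1 ∩ U).Nonempty} :=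
  isOpen_generateFrom_of_mem (Or.inr ⟨U, hU, rfl⟩)

lemma measurableSet_hitting {U : Set G} (hU : IsOpen U) :
    MeasurableSet {C : CFSp G | (C.1 ∩ U).Nonempty} := (isOpen_hitting hU).measurableSet

lemma smul_set_inter_eq (g : G) (S K : Set G) :
    ((g • S) ∩ K = ∅) ↔ (S ∩ (g⁻¹ • K) = ∅) := by
  constructor <;> intro h <;> rw [Set.eq_empty_iff_forall_notMem] at h ⊢ <;>
    intro x hx
  · obtain ⟨hxS, hxK⟩ := hx
    obtain ⟨k, hk, hk2⟩ := hxK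
    have hgx : g * x = k := by rw [← hk2]; simp [smul_eq_mul]
    exact h (g * x) ⟨⟨x, hxS, rfl⟩, by rw [hgx]; exact hk⟩
  · obtain ⟨hgx, hxK⟩ := hx
    obtain ⟨s, hs, hs2⟩ := hgx
    have hsx : s = g⁻¹ * x := by rw [← hs2]; simp [smul_eq_mul]
    exact h s ⟨hs, ⟨x, hxK, by rw [hsx]; simp [smul_eq_mul]⟩⟩

lemma continuous_smul_CF (g : G) : Continuous (fun X : CFSp G => g • X) := by
  refine continuous_generateFrom_iff.mpr ?_
  rintro s (⟨K, hK, rfl⟩ | ⟨U, hU, rfl⟩)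
  · have heq : (fun X : CFSp G => g • X) ⁻¹' {C : CFSp G | C.1 ∩ K = ∅} =
        {C : CFSp G | C.1 ∩ (g⁻¹ • K) = ∅} := by
      ext C
      simp only [Set.mem_preimage, Set.mem_setOf_eq, smul_CF_coe]
      exact smul_set_inter_eq g C.1 K
    rw [heq]
    exact isOpen_generateFrom_of_mem (Or.inl ⟨g⁻¹ • K, hK.smul g⁻¹, rfl⟩)
  · have heq : (fun X : CFSp G => g • X) ⁻¹' {C : CFSp G | (C.1 ∩ U).Nonempty} =
        {C : CFSp G | (C.1 ∩ (g⁻¹ • U)).Nonempty} := by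
      ext C
      simp only [Set.mem_preimage, Set.mem_setOf_eq, smul_CF_coe]
      constructor
      · rintro ⟨x, ⟨s, hs, rfl⟩, hxU⟩
        exact ⟨s, hs, ⟨g • s, hxU, by simp [smul_eq_mul]⟩⟩
      · rintro ⟨x, hxC, u, huU, hux⟩
        refine ⟨g • x, ⟨x, hxC, rfl⟩, ?_⟩
        rw [← hux]
        simpa [smul_eq_mul] using huU
    rw [heq]
    exact isOpen_generateFrom_of_mem (Or.inr ⟨g⁻¹ • U, hU.smul g⁻¹, rfl⟩)

lemma measurable_smul_CF (g : G) : Measurable (fun X : CFSp G => g • X) :=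
  (continuous_smul_CF g).measurable

lemma smul_inv_mul_set (g : G) (S : Set G) : (g • S)⁻¹ * (g • S) = S⁻¹ * S := by
  ext z
  constructor
  · rintro ⟨a, ha, b, ⟨s', hs', rfl⟩, rfl⟩
    have ha' : a⁻¹ ∈ g • S := Set.mem_inv.1 ha
    obtain ⟨s, hs, hsa⟩ := ha'
    have : a = (g * s)⁻¹ := by rw [show g * s = a⁻¹ by simpa [smul_eq_mul] using hsa]; group
    refine ⟨s⁻¹, Set.inv_mem_inv.2 hs, s', hs', ?_⟩
    rw [this]; simp only [smul_eq_mul]; group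
  · rintro ⟨a, ha, b, hb, rfl⟩
    have ha' : a⁻¹ ∈ S := Set.mem_inv.1 ha
    have h1 : g * a⁻¹ ∈ g • S := ⟨a⁻¹, ha', rfl⟩
    refine ⟨(g * a⁻¹)⁻¹, Set.mem_inv.2 (by simpa using h1), g * b, ⟨b, hb, rfl⟩, ?_⟩
    group

lemma smul_mem_extHull {Λ : Set G} (g : G) {X : CFSp G} (hX : X ∈ extHull Λ) :
    g • X ∈ extHull Λ := by
  show ((g • X).1)⁻¹ * (g • X).1 ⊆ _
  rw [smul_CF_coe, smul_inv_mul_set]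
  exact hX

lemma measurableSet_extHull {Λ : Set G} : MeasurableSet (extHull Λ) := by
  have hcl : IsClosed (extHull Λ) := by
    rw [← isOpen_compl_iff]
    have heq : (extHull Λ)ᶜ = ⋃ (p : Set G × Set G) (_ : IsOpen p.1 ∧ IsOpen p.2 ∧
        ∀ a ∈ p.1, ∀ b ∈ p.2, a⁻¹ * b ∉ closure (Λ⁻¹ * Λ)),
        ({C : CFSp G | (C.1 ∩ p.1).Nonempty} ∩ {C : CFSp G | (C.1 ∩ p.2).Nonempty}) := by
      ext X
      simp only [Set.mem_compl_iff, Set.mem_iUnion, Set.mem_inter_iff, Set.mem_setOf_eq]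
      constructor
      · intro hX
        rw [extHull, Set.mem_setOf_eq, Set.not_subset] at hX
        obtain ⟨z, hz, hznot⟩ := hX
        obtain ⟨a, ha, b, hb, rfl⟩ := hz
        have ha' : a⁻¹ ∈ X.1 := Set.mem_inv.1 ha
        have hcont : Continuous (fun p : G × G => p.1⁻¹ * p.2) :=
          (continuous_fst.inv).mul continuous_snd
        have hopen : IsOpen ((fun p : G × G => p.1⁻¹ * p.2) ⁻¹' (closure (Λ⁻¹ * Λ))ᶜ) :=
          (isClosed_closure.isOpen_compl).preimage hcont
        have hmem : (a⁻¹, b) ∈ (fun p : G × G => p.1⁻¹ * p.2) ⁻¹' (closure (Λ⁻¹ * Λ))ᶜ := by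
          simpa using hznot
        obtain ⟨P, Q, hP, hQ, haP, hbQ, hPQ⟩ := isOpen_prod_iff.1 hopen _ _ hmem
        refine ⟨(P, Q), ⟨hP, hQ, fun u hu v hv => ?_⟩, ⟨a⁻¹, ha', haP⟩, ⟨b, hb, hbQ⟩⟩
        exact hPQ (Set.mk_mem_prod hu hv)
      · rintro ⟨⟨P, Q⟩, ⟨hP, hQ, hPQ⟩, ⟨x, hx, hxP⟩, ⟨y, hy, hyQ⟩⟩
        rw [extHull, Set.mem_setOf_eq, Set.not_subset]
        exact ⟨x⁻¹ * y, ⟨x⁻¹, Set.inv_mem_inv.2 hx, y, hy, rfl⟩, hPQ x hxP y hyQ⟩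
    rw [heq]
    exact isOpen_iUnion fun p => isOpen_iUnion fun h =>
      (isOpen_hitting h.1).inter (isOpen_hitting h.2.1)
  exact hcl.measurableSet

lemma eq_emptyCF_iff (X : CFSp G) : X = emptyCF G ↔ X.1 = ∅ := by
  constructor
  · intro h; rw [h]; rfl
  · intro h; exact Subtype.ext h

end CF


/-! ### Counting orbits of closed sets in the hull -/

section Count

variable {G : Type*} [Group G] [TopologicalSpace G] [IsTopologicalGroup G]

/-- The inseparability coset of a point. -/
def qmap (x : G) : Set G := {y : G | x⁻¹ * y ∈ (NN G : Set G)}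

lemma qmap_eq_iff {x y : G} : qmap x = qmap y ↔ x⁻¹ * y ∈ (NN G : Set G) := by
  constructor
  · intro h
    have hy : y ∈ qmap y := by
      simp only [qmap, Set.mem_setOf_eq, inv_mul_cancel]
      exact (NN G).one_mem
    rw [← h] at hy
    exact hy
  · intro h
    ext z
    simp only [qmap, Set.mem_setOf_eq]
    constructor
    · intro hz
      have heq : y⁻¹ * z = (x⁻¹ * y)⁻¹ * (x⁻¹ * z) := by group
      rw [heq]
      exact (NN G).mul_mem ((NN G).inv_mem h) hz
    · intro hz
      have heq : x⁻¹ * z = (x⁻¹ * y) * (y⁻¹ * z) := by group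
      rw [heq]
      exact (NN G).mul_mem h hz

lemma qmap_smul (g x : G) : qmap (g * x) = (fun z => g * z) '' qmap x := by
  ext z
  simp only [qmap, Set.mem_setOf_eq, Set.mem_image]
  constructor
  · intro hz
    refine ⟨g⁻¹ * z, ?_, by group⟩
    show x⁻¹ * (g⁻¹ * z) ∈ (NN G : Set G)
    have heq : x⁻¹ * (g⁻¹ * z) = (g * x)⁻¹ * z := by group
    rw [heq]; exact hz
  · rintro ⟨w, hw, rfl⟩
    have heq : (g * x)⁻¹ * (g * w) = x⁻¹ * w := by group
    rw [heq]; exact hw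

lemma inv_smul_smul_CF (g : G) (X : CFSp G) : g⁻¹ • (g • X) = X :=
  Subtype.ext (by rw [smul_CF_coe, smul_CF_coe]; exact inv_smul_smul g X.1)

/-- The number of inseparability classes of `X ∩ A`, for `X` in the hull of `Λ`. -/
noncomputable def cntf (Λ A : Set G) (X : CFSp G) : ℝ≥0∞ :=
  (extHull Λ).indicator (fun X => cnt' (qmap '' (X.1 ∩ A))) X

namespace Ctx

variable (c : Ctx G)

lemma hull_rel [LocallyCompactSpace G] [SecondCountableTopology G] {X : CFSp G}
    (hX : X ∈ extHull c.Λ) {x y : G} (hx : x ∈ X.1) (hy : y ∈ X.1) :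
    x⁻¹ * y ∈ (c.Λ * c.Λ) * (NN G : Set G) := by
  have h1 : x⁻¹ * y ∈ closure (c.Λ⁻¹ * c.Λ) :=
    hX ⟨x⁻¹, Set.inv_mem_inv.2 hx, y, hy, rfl⟩
  rw [c.hΛinv, c.closure_lam2] at h1
  exact h1

lemma cnt_bound [LocallyCompactSpace G] [SecondCountableTopology G] {K : Set G}
    (hK : IsCompact K) :
    ∃ C : ℝ≥0∞, C ≠ ⊤ ∧ ∀ (A : Set G), A ⊆ K → ∀ X, cntf c.Λ A X ≤ C := by
  have hK' : IsCompact (K⁻¹ * K * (NN G : Set G)) := (hK.inv.mul hK).mul NN_isCompact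
  have hTfin : ((c.Λ * c.Λ) ∩ (K⁻¹ * K * (NN G : Set G))).Finite := c.lam2_finite hK'
  set T := (c.Λ * c.Λ) ∩ (K⁻¹ * K * (NN G : Set G)) with hT
  refine ⟨(T.encard : ℝ≥0∞), by
    rw [Set.Finite.encard_eq_coe_toFinset_card hTfin]; simp, ?_⟩
  intro A hA X
  by_cases hX : X ∈ extHull c.Λ
  swap
  · rw [cntf, Set.indicator_of_notMem hX]; exact zero_le
  rw [cntf, Set.indicator_of_mem hX]
  rcases Set.eq_empty_or_nonempty (X.1 ∩ A) with hemp | ⟨x₀, hx₀⟩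
  · rw [hemp, Set.image_empty, cnt'_empty]; exact zero_le
  have hsub : qmap '' (X.1 ∩ A) ⊆ (fun l => qmap (x₀ * l)) '' T := by
    rintro _ ⟨x, ⟨hxX, hxA⟩, rfl⟩
    obtain ⟨l, hl, n, hn, hln⟩ := c.hull_rel hX hx₀.1 hxX
    have hln' : l * n = x₀⁻¹ * x := hln
    refine ⟨l, ⟨hl, ?_⟩, ?_⟩
    · have heq : l = (x₀⁻¹ * x) * n⁻¹ := by rw [← hln']; group
      rw [heq]
      exact Set.mul_mem_mul
        (Set.mul_mem_mul (Set.inv_mem_inv.2 (hA hx₀.2)) (hA hxA)) ((NN G).inv_mem hn)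
    · refine qmap_eq_iff.2 ?_
      have heq : (x₀ * l)⁻¹ * x = n := by
        have h2 : x = x₀ * (l * n) := by rw [hln']; group
        rw [h2]; group
      rw [heq]; exact hn
  calc cnt' (qmap '' (X.1 ∩ A)) ≤ cnt' ((fun l => qmap (x₀ * l)) '' T) := cnt'_mono hsub
    _ ≤ (T.encard : ℝ≥0∞) := by
        rw [cnt'_eq_encard]
        exact_mod_cast ENat.toENNReal_le.2 (Set.encard_image_le _ _)

lemma hull_cnt_le_one [LocallyCompactSpace G] [SecondCountableTopology G] {B : Set G}
    (hBsat : ∀ x ∈ B, ∀ n ∈ (NN G : Set G), x * n ∈ B)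
    (hBsep : ∀ x ∈ B, ∀ y ∈ B, x⁻¹ * y ∈ c.Λ * c.Λ → x = y) :
    ∀ X, cntf c.Λ B X ≤ 1 := by
  intro X
  by_cases hX : X ∈ extHull c.Λ
  swap
  · rw [cntf, Set.indicator_of_notMem hX]; exact zero_le
  rw [cntf, Set.indicator_of_mem hX]
  refine cnt'_le_one ?_
  rintro _ ⟨x, ⟨hxX, hxB⟩, rfl⟩ _ ⟨y, ⟨hyX, hyB⟩, rfl⟩
  obtain ⟨l, hl, n, hn, hln⟩ := c.hull_rel hX hxX hyX
  have hln' : l * n = x⁻¹ * y := hln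
  have hyn : y * n⁻¹ ∈ B := hBsat y hyB n⁻¹ ((NN G).inv_mem hn)
  have hxl : x⁻¹ * (y * n⁻¹) = l := by
    have h2 : y = x * (l * n) := by rw [hln']; group
    rw [h2]; group
  have hxy : x = y * n⁻¹ := hBsep x hxB (y * n⁻¹) hyn (by rw [hxl]; exact hl)
  refine qmap_eq_iff.2 ?_
  have heq : x⁻¹ * y = n := by rw [hxy]; group
  rw [heq]; exact hn

lemma cntf_smul (g : G) (A : Set G) (X : CFSp G) :
    cntf c.Λ A (g • X) = cntf c.Λ (g⁻¹ • A) X := by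
  by_cases hX : X ∈ extHull c.Λ
  · have hgX : g • X ∈ extHull c.Λ := smul_mem_extHull g hX
    rw [cntf, cntf, Set.indicator_of_mem hgX, Set.indicator_of_mem hX]
    have h1 : (g • X).1 ∩ A = (fun z => g * z) '' (X.1 ∩ (g⁻¹ • A)) := by
      rw [smul_CF_coe]
      ext z
      constructor
      · rintro ⟨⟨x, hx, rfl⟩, hzA⟩
        exact ⟨x, ⟨hx, ⟨g • x, hzA, by simp⟩⟩, rfl⟩
      · rintro ⟨x, ⟨hxX, hxA⟩, rfl⟩
        refine ⟨⟨x, hxX, rfl⟩, ?_⟩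
        obtain ⟨a, ha, ha2⟩ := hxA
        have heq : g * x = a := by rw [← ha2]; simp [smul_eq_mul]
        show g * x ∈ A
        rw [heq]; exact ha
    rw [h1, ← Set.image_comp]
    have h2 : (qmap ∘ fun z => g * z) = (fun s => (fun z => g * z) '' s) ∘ qmap := by
      funext x; simp [Function.comp, qmap_smul]
    rw [h2, Set.image_comp]
    exact cnt'_image ((Set.image_injective.2 (mul_right_injective g)).injOn)
  · have hgX : g • X ∉ extHull c.Λ := fun h => by
      have := smul_mem_extHull g⁻¹ h
      rw [inv_smul_smul_CF] at this
      exact hX this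
    rw [cntf, cntf, Set.indicator_of_notMem hgX, Set.indicator_of_notMem hX]

end Ctx

end Count


/-! ### Measurability of the counting functions -/

section Meas

variable {G : Type*} [Group G] [TopologicalSpace G] [IsTopologicalGroup G]

lemma cnt'_union_disjoint {α : Type*} {S T : Set α} (h : Disjoint S T) :
    cnt' (S ∪ T) = cnt' S + cnt' T := by
  rw [cnt'_eq_encard, cnt'_eq_encard, cnt'_eq_encard, Set.encard_union_eq h]
  push_cast
  rfl

lemma exists_cover (G : Type*) [Group G] [TopologicalSpace G] [IsTopologicalGroup G]
    [LocallyCompactSpace G] [SecondCountableTopology G] :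
    ∃ (U Kc : ℕ → Set G), (∀ n, IsOpen (U n)) ∧ (∀ n, IsCompact (Kc n)) ∧
      (∀ n, U n ⊆ Kc n) ∧ (⋃ n, U n) = Set.univ := by
  choose C hC1 hC2 using fun x : G => exists_compact_mem_nhds x
  obtain ⟨T, hTc, hTeq⟩ := isOpen_iUnion_countable (fun x => interior (C x))
    (fun x => isOpen_interior)
  have huniv : ⋃ x ∈ T, interior (C x) = Set.univ := by
    rw [hTeq, Set.eq_univ_iff_forall]
    exact fun x => Set.mem_iUnion.2 ⟨x, mem_interior_iff_mem_nhds.2 (hC2 x)⟩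
  have hTne : T.Nonempty := by
    rcases Set.eq_empty_or_nonempty T with h | h
    · exfalso
      rw [h] at huniv
      simp only [Set.mem_empty_iff_false, Set.iUnion_of_empty, Set.iUnion_empty] at huniv
      exact (Set.eq_empty_iff_forall_notMem.1 huniv.symm) 1 (Set.mem_univ 1)
    · exact h
  obtain ⟨g, hg⟩ := hTc.exists_eq_range hTne
  refine ⟨fun n => interior (C (g n)), fun n => C (g n), fun n => isOpen_interior,
    fun n => hC1 (g n), fun n => interior_subset, ?_⟩
  rw [← huniv, hg, Set.biUnion_range]

variable (c : Ctx G)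

lemma cntf_empty : cntf c.Λ (∅ : Set G) = fun _ => 0 := by
  funext X
  rw [cntf]
  by_cases hX : X ∈ extHull c.Λ
  · rw [Set.indicator_of_mem hX]
    simp [cnt'_empty]
  · rw [Set.indicator_of_notMem hX]

lemma cntf_iUnion [MeasurableSpace G] [BorelSpace G] {ι : Type*} {A : ι → Set G}
    (hmeas : ∀ i, MeasurableSet (A i)) (hdisj : Pairwise (Function.onFun Disjoint A))
    (X : CFSp G) : cntf c.Λ (⋃ i, A i) X = ∑' i, cntf c.Λ (A i) X := by
  by_cases hX : X ∈ extHull c.Λ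
  swap
  · simp only [cntf, Set.indicator_of_notMem hX]
    simp
  simp only [cntf, Set.indicator_of_mem hX]
  have h1 : X.1 ∩ ⋃ i, A i = ⋃ i, X.1 ∩ A i := Set.inter_iUnion _ _
  rw [h1, Set.image_iUnion]
  refine cnt'_iUnion ?_
  intro i j hij
  rw [Function.onFun, Set.disjoint_left]
  rintro _ ⟨x, ⟨hxX, hxA⟩, rfl⟩ ⟨y, ⟨hyX, hyA⟩, hq⟩
  have hN : y⁻¹ * x ∈ (NN G : Set G) := qmap_eq_iff.1 hq
  have hxAj : x ∈ A j := by
    have := sat_meas (hmeas j) y hyA (y⁻¹ * x) hN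
    have heq : y * (y⁻¹ * x) = x := by group
    rwa [heq] at this
  exact Set.disjoint_left.1 (hdisj hij) hxA hxAj

lemma cntf_split [MeasurableSpace G] [BorelSpace G] {A R : Set G} (hR : MeasurableSet R)
    (X : CFSp G) : cntf c.Λ A X = cntf c.Λ (A ∩ R) X + cntf c.Λ (A \ R) X := by
  by_cases hX : X ∈ extHull c.Λ
  swap
  · simp only [cntf, Set.indicator_of_notMem hX]; simp
  simp only [cntf, Set.indicator_of_mem hX]
  have h1 : X.1 ∩ A = (X.1 ∩ (A ∩ R)) ∪ (X.1 ∩ (A \ R)) := by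
    ext z
    by_cases hz : z ∈ R <;> constructor <;> intro h <;>
      first
      | exact ⟨h.1, h.2.1⟩
      | · rcases h with h | h
          · exact ⟨h.1, h.2.1⟩
          · exact ⟨h.1, h.2.1⟩
      | exact Or.inl ⟨h.1, h.2, hz⟩
      | exact Or.inr ⟨h.1, h.2, hz⟩
  rw [h1, Set.image_union]
  refine cnt'_union_disjoint ?_
  rw [Set.disjoint_left]
  rintro _ ⟨x, ⟨hxX, hxA, hxR⟩, rfl⟩ ⟨y, ⟨hyX, hyA, hyR⟩, hq⟩
  have hN : x⁻¹ * y ∈ (NN G : Set G) := (qmap_eq_iff.1 hq.symm)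
  have : y ∈ R := by
    have h2 := sat_meas hR x hxR (x⁻¹ * y) hN
    have heq : x * (x⁻¹ * y) = y := by group
    rwa [heq] at h2
  exact hyR this

end Meas


/-! ### Measurability for open sets -/

section MeasOpen

variable {G : Type*} [Group G] [TopologicalSpace G] [IsTopologicalGroup G]
  [LocallyCompactSpace G] [SecondCountableTopology G] (c : Ctx G)

lemma meas_cnt_open {A : Set G} (hA : IsOpen A) : Measurable (cntf c.Λ A) := by
  obtain ⟨e, heo, hec⟩ := Ctx.exists_basis_enum G
  set S : ℕ → Set (CFSp G) := fun k => extHull c.Λ ∩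
    ⋃ (σ : Fin (k+1) → ℕ) (_ : (∀ j, e (σ j) ⊆ A) ∧
        (∀ i j : Fin (k+1), i ≠ j → Disjoint (e (σ i)) (e (σ j)))),
      ⋂ j, {X : CFSp G | (X.1 ∩ e (σ j)).Nonempty} with hS
  have hSmeas : ∀ k, MeasurableSet (S k) := by
    intro k
    refine measurableSet_extHull.inter ?_
    refine MeasurableSet.iUnion (fun σ => ?_)
    refine MeasurableSet.iUnion (fun _ => ?_)
    exact MeasurableSet.iInter (fun j => measurableSet_hitting (heo (σ j)))
  have hkey : ∀ (k : ℕ) (X : CFSp G), X ∈ S k ↔ ((k : ℝ≥0∞) + 1 ≤ cntf c.Λ A X) := by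
    intro k X
    constructor
    · rintro ⟨hX, hU⟩
      simp only [Set.mem_iUnion] at hU
      obtain ⟨σ, ⟨hsubA, hdisj⟩, hmem⟩ := hU
      rw [cntf, Set.indicator_of_mem hX]
      have hx : ∀ j : Fin (k+1), ∃ x, x ∈ X.1 ∩ e (σ j) := fun j => Set.mem_iInter.1 hmem j
      choose x hxmem using hx
      have hinj : Function.Injective (fun j => qmap (x j)) := by
        intro i j hij
        by_contra hne
        have hN : (x i)⁻¹ * (x j) ∈ (NN G : Set G) := qmap_eq_iff.1 hij
        have hxj : x j ∈ e (σ i) := by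
          have h2 := sat_open (heo (σ i)) (hxmem i).2 hN
          have heq : x i * ((x i)⁻¹ * (x j)) = x j := by group
          rwa [heq] at h2
        exact Set.disjoint_left.1 (hdisj i j hne) hxj (hxmem j).2
      have hle := le_cnt'_of_inj (S := qmap '' (X.1 ∩ A)) (fun j => qmap (x j)) hinj
        (fun j => ⟨x j, ⟨(hxmem j).1, hsubA j (hxmem j).2⟩, rfl⟩)
      calc ((k : ℝ≥0∞) + 1) = (((k+1 : ℕ) : ℝ≥0∞)) := by push_cast; ring
        _ ≤ _ := hle
    · intro hle
      have hX : X ∈ extHull c.Λ := by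
        by_contra hX
        rw [cntf, Set.indicator_of_notMem hX] at hle
        exact absurd hle (by simp)
      refine ⟨hX, ?_⟩
      rw [cntf, Set.indicator_of_mem hX] at hle
      have hle' : (((k+1 : ℕ)) : ℝ≥0∞) ≤ cnt' (qmap '' (X.1 ∩ A)) := by
        rw [show (((k+1 : ℕ)) : ℝ≥0∞) = (k : ℝ≥0∞) + 1 by push_cast; ring]
        exact hle
      obtain ⟨f, hfinj, hfmem⟩ := exists_inj_of_le_cnt' hle'
      have hrep : ∀ j, ∃ x, (x ∈ X.1 ∧ x ∈ A) ∧ qmap x = f j := by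
        intro j
        obtain ⟨x, hx, hqx⟩ := hfmem j
        exact ⟨x, hx, hqx⟩
      choose x hx hqx using hrep
      have hqne : ∀ i j : Fin (k+1), i ≠ j → qmap (x i) ≠ qmap (x j) := by
        intro i j hij h
        exact hij (hfinj (by rw [← hqx i, ← hqx j, h]))
      have hopen2 : ∀ j, ∃ n, x j ∈ e n ∧ e n ⊆ A ∩ ((x j) • c.W) := by
        intro j
        obtain ⟨t, ht, hxt, hsubt⟩ := (isBasis_countableBasis G).exists_subset_of_mem_open
          (⟨(hx j).2, ⟨1, c.hW1, mul_one _⟩⟩ : x j ∈ A ∩ ((x j) • c.W))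
          (hA.inter (c.hWo.smul (x j)))
        obtain ⟨n, hn⟩ := hec t ht
        exact ⟨n, hn ▸ hxt, hn ▸ hsubt⟩
      choose σ hσ1 hσ2 using hopen2
      refine Set.mem_iUnion.2 ⟨σ, Set.mem_iUnion.2
        ⟨⟨fun j => (hσ2 j).trans Set.inter_subset_left, ?_⟩,
          Set.mem_iInter.2 (fun j => ⟨x j, (hx j).1, hσ1 j⟩)⟩⟩
      intro i j hij
      rw [Set.disjoint_left]
      intro z hzi hzj
      obtain ⟨w, hw, hwz⟩ := ((hσ2 i) hzi).2
      obtain ⟨w', hw', hwz'⟩ := ((hσ2 j) hzj).2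
      simp only [smul_eq_mul] at hwz hwz'
      have h2 : x j * w' = x i * w := hwz'.trans hwz.symm
      have h3 : x j = x i * (w * w'⁻¹) := by
        have h4 := congrArg (fun t => t * w'⁻¹) h2
        simpa [mul_assoc] using h4
      have hV : (x i)⁻¹ * (x j) ∈ c.V := by
        have heq : (x i)⁻¹ * (x j) = w * w'⁻¹ := by rw [h3]; group
        rw [heq]
        exact c.hWV (Set.mul_mem_mul hw (Set.inv_mem_inv.2 hw'))
      have hrel := c.hull_rel hX (hx i).1 (hx j).1
      have hN := c.V_cap_lam2N _ hV hrel
      exact hqne i j hij (qmap_eq_iff.2 hN)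
  have hrepr : cntf c.Λ A = fun X => ∑' k : ℕ, (S k).indicator (fun _ => (1 : ℝ≥0∞)) X := by
    funext X
    have hna : (∃ n : ℕ, cntf c.Λ A X = n) ∨ cntf c.Λ A X = ⊤ := by
      by_cases hX : X ∈ extHull c.Λ
      · rw [cntf, Set.indicator_of_mem hX]
        exact cnt'_nat_or_top _
      · rw [cntf, Set.indicator_of_notMem hX]
        exact Or.inl ⟨0, by simp⟩
    rw [ennreal_repr hna]
    congr 1
    funext k
    by_cases h : (k : ℝ≥0∞) + 1 ≤ cntf c.Λ A X
    · rw [if_pos h, Set.indicator_of_mem ((hkey k X).2 h)]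
    · rw [if_neg h, Set.indicator_of_notMem (fun hmem => h ((hkey k X).1 hmem))]
  rw [hrepr]
  exact Measurable.ennreal_tsum (fun k => measurable_const.indicator (hSmeas k))

end MeasOpen


section MeasAll

variable {G : Type*} [Group G] [TopologicalSpace G] [IsTopologicalGroup G]
  [LocallyCompactSpace G] [SecondCountableTopology G] [MeasurableSpace G] [BorelSpace G]
  (c : Ctx G)

lemma meas_cnt {A : Set G} (hA : MeasurableSet A) : Measurable (cntf c.Λ A) := by
  obtain ⟨U, Kc, hUo, hKc, hUK, hUcov⟩ := exists_cover G
  set R : ℕ → Set G := fun n => ⋃ (j : Fin n), U j with hR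
  have hRo : ∀ n, IsOpen (R n) := fun n => isOpen_iUnion (fun j => hUo j)
  set E : ℕ → Set G := fun n => U n \ R n with hE
  have hEmeas : ∀ n, MeasurableSet (E n) := fun n =>
    ((hUo n).measurableSet).diff (hRo n).measurableSet
  have hEdisj : Pairwise (Function.onFun Disjoint E) := by
    intro m n hmn
    rcases Nat.lt_or_ge m n with h | h
    · rw [Function.onFun, Set.disjoint_left]
      intro x hxm hxn
      exact hxn.2 (Set.mem_iUnion.2 ⟨⟨m, h⟩, hxm.1⟩)
    · have h' : n < m := lt_of_le_of_ne h (Ne.symm hmn)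
      rw [Function.onFun, Set.disjoint_left]
      intro x hxm hxn
      exact hxm.2 (Set.mem_iUnion.2 ⟨⟨n, h'⟩, hxn.1⟩)
  have hEcov : (⋃ n, E n) = Set.univ := by
    rw [Set.eq_univ_iff_forall]
    intro g
    have hg : ∃ n, g ∈ U n := by
      have hg2 : g ∈ ⋃ n, U n := by rw [hUcov]; exact Set.mem_univ g
      exact Set.mem_iUnion.1 hg2
    refine Set.mem_iUnion.2 ⟨Nat.find hg, Nat.find_spec hg, ?_⟩
    intro hmem
    obtain ⟨⟨j, hj⟩, hgj⟩ := Set.mem_iUnion.1 hmem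
    exact absurd hgj (Nat.find_min hg hj)
  have hdiff : ∀ (n : ℕ) (A' R' : Set G), MeasurableSet R' → A' ⊆ Kc n →
      Measurable (cntf c.Λ A') → Measurable (cntf c.Λ (A' ∩ R')) →
      Measurable (cntf c.Λ (A' \ R')) := by
    intro n A' R' hR' hsub hm1 hm2
    obtain ⟨C, hCtop, hC⟩ := c.cnt_bound (hKc n)
    have heq : cntf c.Λ (A' \ R') = fun X => cntf c.Λ A' X - cntf c.Λ (A' ∩ R') X := by
      funext X
      have hsplit := cntf_split c (A := A') hR' X
      rw [hsplit]
      have hfin : cntf c.Λ (A' ∩ R') X ≠ ⊤ :=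
        fun h => hCtop (top_le_iff.1 (h ▸ hC (A' ∩ R') (fun x hx => hsub hx.1) X))
      exact (ENNReal.add_sub_cancel_left hfin).symm
    rw [heq]
    exact hm1.sub hm2
  have hEmeasf : ∀ n, Measurable (cntf c.Λ (E n)) := fun n =>
    hdiff n (U n) (R n) (hRo n).measurableSet (hUK n)
      (meas_cnt_open c (hUo n)) (meas_cnt_open c ((hUo n).inter (hRo n)))
  have main : ∀ ⦃t : Set G⦄, MeasurableSet t → ∀ n, Measurable (cntf c.Λ (t ∩ E n)) := by
    refine MeasurableSpace.induction_on_inter (s := {s : Set G | IsOpen s})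
      BorelSpace.measurable_eq (fun s hs t ht _ => IsOpen.inter hs ht) ?_ ?_ ?_ ?_
    · intro n
      rw [Set.empty_inter, cntf_empty]
      exact measurable_const
    · intro t ht n
      have heq : t ∩ E n = (t ∩ U n) \ R n := by
        rw [hE]
        exact (Set.inter_diff_assoc t (U n) (R n)).symm
      rw [heq]
      exact hdiff n (t ∩ U n) (R n) (hRo n).measurableSet
        (fun x hx => hUK n hx.2) (meas_cnt_open c (ht.inter (hUo n)))
        (meas_cnt_open c ((ht.inter (hUo n)).inter (hRo n)))
    · intro t htm ih n
      have heq : tᶜ ∩ E n = E n \ t := by rw [Set.diff_eq, Set.inter_comm]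
      rw [heq]
      have hmint : Measurable (cntf c.Λ (E n ∩ t)) := by
        rw [Set.inter_comm]; exact ih n
      exact hdiff n (E n) t htm (fun x hx => hUK n hx.1) (hEmeasf n) hmint
    · intro f hfd hfm ih n
      have heq : (⋃ i, f i) ∩ E n = ⋃ i, (f i ∩ E n) := Set.iUnion_inter _ _
      rw [heq]
      have hfun : cntf c.Λ (⋃ i, (f i ∩ E n)) = fun X => ∑' i, cntf c.Λ (f i ∩ E n) X := by
        funext X
        exact cntf_iUnion c (fun i => (hfm i).inter (hEmeas n))
          (fun i j hij => Disjoint.mono Set.inter_subset_left Set.inter_subset_left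
            (hfd hij)) X
      rw [hfun]
      exact Measurable.ennreal_tsum (fun i => ih i n)
  have hAeq : cntf c.Λ A = fun X => ∑' n, cntf c.Λ (A ∩ E n) X := by
    funext X
    have h1 : A = ⋃ n, (A ∩ E n) := by
      rw [← Set.inter_iUnion, hEcov, Set.inter_univ]
    conv_lhs => rw [h1]
    exact cntf_iUnion c (fun n => hA.inter (hEmeas n))
      (fun i j hij => Disjoint.mono Set.inter_subset_right Set.inter_subset_right
        (hEdisj hij)) X
  rw [hAeq]
  exact Measurable.ennreal_tsum (fun n => main hA n)

end MeasAll

end S11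


open S11

/-- a ⋆-approximate lattice `Λ` has "finite covolume": there is a Borel set `B` of
finite Haar measure with `BΛ² = G` and `B⁻¹B ∩ Λ² = {1}`. -/
theorem statement11 {G : Type*} [Group G] [TopologicalSpace G] [IsTopologicalGroup G]
    [LocallyCompactSpace G] [SecondCountableTopology G]
    [MeasurableSpace G] [BorelSpace G]
    (Λ : Set G) (hΛ : IsStarApproxLattice Λ)
    (μ : Measure G) [μ.IsHaarMeasure] :
    ∃ B : Set G, MeasurableSet B ∧ μ B < ⊤ ∧ B * (Λ * Λ) = Set.univ ∧
      (B⁻¹ * B) ∩ (Λ * Λ) = {1} := by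
  classical
  obtain ⟨⟨hΛ1, hΛinv, F, hFfin, hFΛ⟩, hUD, ν, hνprob, hνhull, hνempty, hνinv⟩ := hΛ
  obtain ⟨V₀, hV₀nhds, hV₀⟩ := hUD
  have hlam2eq : Λ⁻¹ * Λ = Λ * Λ := by rw [hΛinv]
  have hV1 : (1 : G) ∈ interior V₀ := mem_interior_iff_mem_nhds.2 hV₀nhds
  obtain ⟨W₁, hW₁o, hW₁1, hW₁⟩ := exists_open_nhds_one_mul_subset
    (isOpen_interior.mem_nhds hV1)
  set c : Ctx G :=
    { Λ := Λ
      V := interior V₀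
      W := W₁ ∩ W₁⁻¹
      hVo := isOpen_interior
      hV1 := hV1
      hVΛ := by
        intro x hx
        exact hV₀ ⟨interior_subset hx.1, hlam2eq ▸ hx.2⟩
      hWo := hW₁o.inter hW₁o.inv
      hW1 := ⟨hW₁1, by simpa using hW₁1⟩
      hWV := by
        rintro _ ⟨a, ha, b, hb, rfl⟩
        have hb' : b ∈ W₁ := by
          have := (Set.mem_inv.1 hb).2
          simpa using (Set.mem_inv.1 this)
        exact hW₁ (Set.mul_mem_mul ha.1 hb')
      hWV' := by
        rintro _ ⟨a, ha, b, hb, rfl⟩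
        have ha' : a ∈ W₁ := by
          have := (Set.mem_inv.1 ha).2
          simpa using (Set.mem_inv.1 this)
        exact hW₁ (Set.mul_mem_mul ha' hb.1)
      hΛ1 := hΛ1
      hΛinv := hΛinv
      F := F
      hFfin := hFfin
      hFΛ := hFΛ } with hc
  obtain ⟨B, hBmeas, hBcov, hBsep, hBne⟩ := Ctx.exists_greedy c
  haveI : IsProbabilityMeasure ν := hνprob
  -- the periodization measure
  set m : Measure G := Measure.ofMeasurable (fun s _ => ∫⁻ X, cntf c.Λ s X ∂ν)
    (by
      show ∫⁻ X, cntf c.Λ ∅ X ∂ν = 0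
      rw [cntf_empty c]
      simp)
    (by
      intro f hf hd
      rw [← lintegral_tsum (fun i => (meas_cnt c (hf i)).aemeasurable)]
      exact lintegral_congr (fun X => cntf_iUnion c hf hd X)) with hmdef
  have hm_apply : ∀ {s : Set G}, MeasurableSet s → m s = ∫⁻ X, cntf c.Λ s X ∂ν :=
    fun hs => Measure.ofMeasurable_apply _ hs
  haveI hminv : m.IsMulLeftInvariant := by
    constructor
    intro g
    refine Measure.ext (fun s hs => ?_)
    rw [Measure.map_apply (measurable_const_mul g) hs]
    have hpre : (fun h => g * h) ⁻¹' s = g⁻¹ • s := by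
      ext x
      constructor
      · intro hx
        exact ⟨g * x, hx, by simp⟩
      · rintro ⟨y, hy, rfl⟩
        simpa [smul_eq_mul, mul_assoc] using hy
    have hpre_meas : MeasurableSet ((fun h => g * h) ⁻¹' s) := hs.preimage (measurable_const_mul g)
    rw [hm_apply hpre_meas, hm_apply hs]
    have h2 : ∀ X, cntf c.Λ ((fun h => g * h) ⁻¹' s) X = cntf c.Λ s (g • X) := by
      intro X
      rw [hpre]
      exact (Ctx.cntf_smul c g s X).symm
    calc ∫⁻ X, cntf c.Λ ((fun h => g * h) ⁻¹' s) X ∂ν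
        = ∫⁻ X, cntf c.Λ s (g • X) ∂ν := lintegral_congr h2
      _ = ∫⁻ Y, cntf c.Λ s Y ∂(Measure.map (fun X : CFSp G => g • X) ν) :=
          (lintegral_map (meas_cnt c hs) (measurable_smul_CF g)).symm
      _ = ∫⁻ Y, cntf c.Λ s Y ∂ν := by rw [hνinv g]
  haveI hmfin : IsFiniteMeasureOnCompacts m := by
    constructor
    intro K hK
    obtain ⟨U, Kc, hUo, hKc, hUK, hUcov⟩ := exists_cover G
    obtain ⟨t, htcov⟩ := hK.elim_finite_subcover U hUo
      (by rw [hUcov]; exact Set.subset_univ K)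
    calc m K ≤ m (⋃ i ∈ t, U i) := measure_mono htcov
      _ ≤ ∑ i ∈ t, m (U i) := measure_biUnion_finset_le t U
      _ < ⊤ := by
        refine ENNReal.sum_lt_top.2 (fun i _ => ?_)
        obtain ⟨C, hCtop, hC⟩ := Ctx.cnt_bound c (hKc i)
        rw [hm_apply (hUo i).measurableSet]
        calc ∫⁻ X, cntf c.Λ (U i) X ∂ν ≤ ∫⁻ _, C ∂ν :=
              lintegral_mono (fun X => hC (U i) (hUK i) X)
          _ = C := by simp
          _ < ⊤ := hCtop.lt_top
  haveI hmpos : m.IsOpenPosMeasure := by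
    constructor
    intro Uo hUoo hUone
    obtain ⟨e, heo, hec⟩ := Ctx.exists_basis_enum G
    have hcovX : {X : CFSp G | X.1.Nonempty} ⊆
        ⋃ n, {X : CFSp G | (X.1 ∩ e n).Nonempty} := by
      rintro X ⟨x, hx⟩
      obtain ⟨s, hs, hxs, _⟩ := (TopologicalSpace.isBasis_countableBasis G).exists_subset_of_mem_open
        (Set.mem_univ x) isOpen_univ
      obtain ⟨n, hn⟩ := hec s hs
      exact Set.mem_iUnion.2 ⟨n, ⟨x, hx, hn ▸ hxs⟩⟩
    have hpos : ∃ n, 0 < ν {X : CFSp G | (X.1 ∩ e n).Nonempty} := by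
      by_contra hno
      push_neg at hno
      have hz : ν (⋃ n, {X : CFSp G | (X.1 ∩ e n).Nonempty}) = 0 :=
        measure_iUnion_null (fun n => le_antisymm (hno n) (zero_le))
      have h1 : ν {X : CFSp G | X.1.Nonempty} = 0 := measure_mono_null hcovX hz
      have h2 : {X : CFSp G | X.1.Nonempty}ᶜ = {emptyCF G} := by
        ext X
        simp only [Set.mem_compl_iff, Set.mem_setOf_eq, Set.not_nonempty_iff_eq_empty,
          Set.mem_singleton_iff]
        exact (eq_emptyCF_iff X).symm
      have h4 : ν Set.univ ≤ ν {X : CFSp G | X.1.Nonempty} +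
          ν {X : CFSp G | X.1.Nonempty}ᶜ := by
        rw [← Set.union_compl_self {X : CFSp G | X.1.Nonempty}]
        exact measure_union_le _ _
      rw [h1, h2, hνempty, measure_univ] at h4
      simpa using h4
    obtain ⟨n₀, hn₀⟩ := hpos
    have hme : 0 < m (e n₀) := by
      rw [hm_apply (heo n₀).measurableSet]
      have hsetmeas : MeasurableSet (extHull c.Λ ∩ {X : CFSp G | (X.1 ∩ e n₀).Nonempty}) :=
        measurableSet_extHull.inter (measurableSet_hitting (heo n₀))
      have hge : ∀ X, (extHull c.Λ ∩ {X : CFSp G | (X.1 ∩ e n₀).Nonempty}).indicator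
          (fun _ => (1 : ℝ≥0∞)) X ≤ cntf c.Λ (e n₀) X := by
        intro X
        by_cases hX : X ∈ extHull c.Λ ∩ {X : CFSp G | (X.1 ∩ e n₀).Nonempty}
        · rw [Set.indicator_of_mem hX, cntf, Set.indicator_of_mem hX.1]
          obtain ⟨x, hx⟩ := hX.2
          have := le_cnt'_of_inj (S := qmap '' (X.1 ∩ e n₀)) (fun _ : Fin 1 => qmap x)
            (fun a b _ => Subsingleton.elim a b) (fun _ => ⟨x, hx, rfl⟩)
          simpa using this
        · rw [Set.indicator_of_notMem hX]
          exact zero_le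
      have hposint : 0 < ν (extHull c.Λ ∩ {X : CFSp G | (X.1 ∩ e n₀).Nonempty}) := by
        by_contra hzero
        push_neg at hzero
        have h0 : ν (extHull c.Λ ∩ {X : CFSp G | (X.1 ∩ e n₀).Nonempty}) = 0 :=
          le_antisymm hzero (zero_le)
        have hsplit : ν {X : CFSp G | (X.1 ∩ e n₀).Nonempty} ≤
            ν (extHull c.Λ ∩ {X : CFSp G | (X.1 ∩ e n₀).Nonempty}) + ν (extHull c.Λ)ᶜ := by
          refine le_trans (measure_mono ?_) (measure_union_le _ _)
          intro X hX
          by_cases h : X ∈ extHull c.Λ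
          · exact Or.inl ⟨h, hX⟩
          · exact Or.inr h
        rw [h0, hνhull, add_zero] at hsplit
        exact absurd (lt_of_lt_of_le hn₀ hsplit) (lt_irrefl 0)
      calc (0 : ℝ≥0∞) < ν (extHull c.Λ ∩ {X : CFSp G | (X.1 ∩ e n₀).Nonempty}) := hposint
        _ = ∫⁻ X, (extHull c.Λ ∩ {X : CFSp G | (X.1 ∩ e n₀).Nonempty}).indicator
            (fun _ => (1 : ℝ≥0∞)) X ∂ν := by
            rw [lintegral_indicator hsetmeas]
            simp
        _ ≤ ∫⁻ X, cntf c.Λ (e n₀) X ∂ν := lintegral_mono hge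
    obtain ⟨u, hu⟩ := hUone
    intro hm0
    have hcov2 : e n₀ ⊆ ⋃ x : G, ((x * u⁻¹) • Uo) := by
      intro x hx
      refine Set.mem_iUnion.2 ⟨x, ⟨u, hu, ?_⟩⟩
      show (x * u⁻¹) • u = x
      simp only [smul_eq_mul]
      group
    obtain ⟨T, hTc, hTeq⟩ := TopologicalSpace.isOpen_iUnion_countable (fun x : G => (x * u⁻¹) • Uo)
      (fun x => hUoo.smul _)
    rw [← hTeq] at hcov2
    have htrans : ∀ x : G, m (x • Uo) = 0 := by
      intro x
      have hxeq : x • Uo = (fun h => x⁻¹ * h) ⁻¹' Uo := by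
        ext z
        constructor
        · rintro ⟨y, hy, rfl⟩
          simpa [smul_eq_mul, mul_assoc] using hy
        · intro hz
          exact ⟨x⁻¹ * z, hz, by simp [smul_eq_mul, mul_assoc]⟩
      rw [hxeq, measure_preimage_mul m x⁻¹ Uo]
      exact hm0
    have hz2 : m (e n₀) = 0 := by
      refine measure_mono_null hcov2 ?_
      exact (measure_biUnion_null_iff hTc).2 (fun x _ => htrans _)
    rw [hz2] at hme
    exact absurd hme (lt_irrefl 0)
  haveI hmHaar : m.IsHaarMeasure := ⟨⟩
  have huniq := Measure.isMulLeftInvariant_eq_smul m μ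
  have hcfpos : 0 < m.haarScalarFactor μ := Measure.haarScalarFactor_pos_of_isHaarMeasure m μ
  have hBsat := sat_meas hBmeas
  have hmB : m B ≤ 1 := by
    rw [hm_apply hBmeas]
    calc ∫⁻ X, cntf c.Λ B X ∂ν ≤ ∫⁻ _, 1 ∂ν :=
        lintegral_mono (Ctx.hull_cnt_le_one c hBsat hBsep)
      _ = 1 := by simp
  have hmBeq : m B = (m.haarScalarFactor μ : ℝ≥0∞) * μ B := by
    conv_lhs => rw [huniq]
    rfl
  have hμB : μ B < ⊤ := by
    by_contra h
    push_neg at h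
    have hBtop : μ B = ⊤ := top_le_iff.1 h
    have : m B = ⊤ := by
      rw [hmBeq, hBtop, ENNReal.mul_top]
      exact_mod_cast hcfpos.ne'
    rw [this] at hmB
    simp at hmB
  refine ⟨B, hBmeas, hμB, hBcov, ?_⟩
  apply Set.Subset.antisymm
  · rintro z ⟨hz1, hz2⟩
    obtain ⟨a, ha, b, hb, rfl⟩ := hz1
    have heq := hBsep a⁻¹ (Set.mem_inv.1 ha) b hb (by simpa using hz2)
    rw [Set.mem_singleton_iff, ← heq]
    group
  · intro z hz
    rw [Set.mem_singleton_iff] at hz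
    subst hz
    obtain ⟨b, hb⟩ := hBne
    refine ⟨⟨b⁻¹, ?_, b, hb, by group⟩, ⟨1, hΛ1, 1, hΛ1, one_mul 1⟩⟩
    rw [Set.mem_inv]
    simpa using hb
end

section
/- Let Γ be a discrete subgroup of a product G × H of locally compact second countable groups. Suppose that Γ projects densely to H and that G is unimodular. Let W₀ be a compact neighbourhood of the identity in H and suppose there is a subset F ⊆ G of finite Haar measure such that F · p_G(Γ ∩ (G × W₀)) = G, where p_G : G × H → G is the projection. Then Γ is a lattice in G × H, i.e. a discrete subgroup of finite covolume (there exists a Borel subset of G × H of finite Haar measure meeting every coset of Γ). -/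
open scoped Pointwise ENNReal NNReal
open MeasureTheory

/-- if a discrete subgroup `Γ ≤ G × H` projects densely to `H`, `G` is unimodular,
and there is a set `F ⊆ G` of finite Haar measure with `F · p_G(Γ ∩ (G × W₀)) = G` for some
compact identity neighbourhood `W₀ ⊆ H`, then `Γ` is a lattice in `G × H`. -/
theorem statement12 {G H : Type*}
    [Group G] [TopologicalSpace G] [IsTopologicalGroup G]
    [LocallyCompactSpace G] [SecondCountableTopology G]
    [MeasurableSpace G] [BorelSpace G]
    [Group H] [TopologicalSpace H] [IsTopologicalGroup H]
    [LocallyCompactSpace H] [SecondCountableTopology H]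
    [MeasurableSpace H] [BorelSpace H]
    (Γ : Subgroup (G × H)) [DiscreteTopology Γ]
    (hdense : Dense (Prod.snd '' (Γ : Set (G × H))))
    (μG : Measure G) [μG.IsHaarMeasure] [μG.IsMulRightInvariant]
    (W₀ : Set H) (hW₀c : IsCompact W₀) (hW₀n : W₀ ∈ nhds (1 : H))
    (F : Set G) (hF : μG F < ⊤)
    (hcover : F * (Prod.fst '' ((Γ : Set (G × H)) ∩ (Set.univ ×ˢ W₀))) = Set.univ)
    (μ : Measure (G × H)) [μ.IsHaarMeasure] :
    ∃ D : Set (G × H), MeasurableSet D ∧ μ D < ⊤ ∧ D * (Γ : Set (G × H)) = Set.univ := by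
  classical
  set K : Set H := closure (W₀ * W₀⁻¹) with hKdef
  have hKc : IsCompact K := (hW₀c.mul hW₀c.inv).closure
  have hKm : MeasurableSet K := isClosed_closure.measurableSet
  set F' : Set G := MeasureTheory.toMeasurable μG F with hF'def
  have hFsub : F ⊆ F' := subset_toMeasurable μG F
  have hF'm : MeasurableSet F' := measurableSet_toMeasurable μG F
  have hF' : μG F' < ⊤ := by
    rw [hF'def, measure_toMeasurable]; exact hF
  refine ⟨F' ×ˢ K, hF'm.prod hKm, ?_, ?_⟩
  · -- finiteness of measure
    set S : Set (G × H) := Set.univ ×ˢ K with hSdef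
    have hSm : MeasurableSet S := MeasurableSet.univ.prod hKm
    set ν : Measure G := (μ.restrict S).map Prod.fst with hν
    have key : ∀ A : Set G, MeasurableSet A → ν A = μ (A ×ˢ K) := by
      intro A hA
      rw [hν, Measure.map_apply measurable_fst hA, Measure.restrict_apply (measurable_fst hA)]
      congr 1
      ext x
      simp [Set.mem_prod, hSdef]
    have hνinv : ν.IsMulLeftInvariant := by
      constructor
      intro g
      ext A hA
      rw [Measure.map_apply (measurable_const_mul g) hA, key _ ((measurable_const_mul g) hA),
        key _ hA]
      have hset : ((fun x : G => g * x) ⁻¹' A) ×ˢ K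
          = (fun x : G × H => (g, (1 : H)) * x) ⁻¹' (A ×ˢ K) := by
        ext x
        simp [Set.mem_prod, Prod.ext_iff]
      rw [hset]
      exact measure_preimage_mul μ ((g, (1 : H))) (A ×ˢ K)
    have hνfin : IsFiniteMeasureOnCompacts ν := by
      constructor
      intro C hC
      have h1 : ν C ≤ ν (closure C) := measure_mono subset_closure
      have h2 : ν (closure C) = μ ((closure C) ×ˢ K) :=
        key _ isClosed_closure.measurableSet
      have h3 : μ ((closure C) ×ˢ K) < ⊤ := (hC.closure.prod hKc).measure_lt_top
      exact lt_of_le_of_lt h1 (h2 ▸ h3)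
    have := Measure.isMulLeftInvariant_eq_smul ν μG
    have hνF' : ν F' < ⊤ := by
      rw [this]
      simp only [Measure.smul_apply, smul_eq_mul]
      exact ENNReal.mul_lt_top ENNReal.coe_lt_top hF'
    rw [← key F' hF'm]
    exact hνF'
  · -- covering
    apply Set.eq_univ_of_forall
    rintro ⟨g, h⟩
    have hU : IsOpen ((fun y : H => h * y⁻¹) ⁻¹' interior W₀) :=
      isOpen_interior.preimage (by continuity)
    have hUne : ((fun y : H => h * y⁻¹) ⁻¹' interior W₀).Nonempty := by
      refine ⟨h, ?_⟩
      simp only [Set.mem_preimage, mul_inv_cancel]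
      exact mem_interior_iff_mem_nhds.2 hW₀n
    obtain ⟨y, hy, hyU⟩ := hdense.exists_mem_open hU hUne
    obtain ⟨γ, hγ, rfl⟩ := hy
    have hg : g * γ.1⁻¹ ∈ F * (Prod.fst '' ((Γ : Set (G × H)) ∩ (Set.univ ×ˢ W₀))) := by
      rw [hcover]; trivial
    obtain ⟨f, hf, l, hl, hfl⟩ := hg
    obtain ⟨δ, hδ, rfl⟩ := hl
    obtain ⟨hδΓ, hδW⟩ := hδ
    have hδ2 : δ.2 ∈ W₀ := hδW.2
    have hyW : h * γ.2⁻¹ ∈ W₀ := interior_subset hyU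
    have hd : ((f, h * γ.2⁻¹ * δ.2⁻¹) : G × H) ∈ F' ×ˢ K := by
      constructor
      · exact hFsub hf
      · exact subset_closure (Set.mul_mem_mul hyW (Set.inv_mem_inv.2 hδ2))
    have hγ' : δ * γ ∈ (Γ : Set (G × H)) := mul_mem hδΓ hγ
    have hprod : ((f, h * γ.2⁻¹ * δ.2⁻¹) : G × H) * (δ * γ) = (g, h) := by
      have h1 : f * δ.1 = g * γ.1⁻¹ := hfl
      have : ((f, h * γ.2⁻¹ * δ.2⁻¹) : G × H) * (δ * γ)
          = (f * (δ.1 * γ.1), h * γ.2⁻¹ * δ.2⁻¹ * (δ.2 * γ.2)) := rfl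
      rw [this]
      refine Prod.ext ?_ ?_
      · show f * (δ.1 * γ.1) = g
        calc f * (δ.1 * γ.1) = (f * δ.1) * γ.1 := by rw [mul_assoc]
          _ = g * γ.1⁻¹ * γ.1 := by rw [h1]
          _ = g := by group
      · show h * γ.2⁻¹ * δ.2⁻¹ * (δ.2 * γ.2) = h
        group
    rw [← hprod]
    exact Set.mul_mem_mul hd hγ'
end

section
/- Let X₀ be a uniformly discrete subset of a locally compact second countable group G. Then there exists a Borel section s : Ω^ext_{X₀} \ {∅} → G, i.e. a Borel measurable map such that s(X) ∈ X for every nonempty X ∈ Ω^ext_{X₀}. -/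
open scoped Pointwise ENNReal NNReal
open MeasureTheory

/-- existence of a Borel section of `Ω^ext_{X₀} \ {∅}` when `X₀` is uniformly
discrete: a Borel measurable map `s` with `s(X) ∈ X` for every nonempty `X` in the extended
invariant hull. -/
theorem statement15 {G : Type*} [Group G] [TopologicalSpace G] [IsTopologicalGroup G]
    [LocallyCompactSpace G] [SecondCountableTopology G]
    [MeasurableSpace G] [BorelSpace G]
    (X₀ : Set G) (hud : UniformlyDiscrete X₀) :
    ∃ s : {X : CFSp G // X ∈ extHull X₀ ∧ X.1.Nonempty} → G,
      Measurable s ∧ ∀ X, s X ∈ X.1.1 := by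
  classical
  obtain ⟨V, hV, hVdisc⟩ := hud
  obtain ⟨V', hV'V, hV'open, hV'1⟩ := mem_nhds_iff.mp hV
  obtain ⟨W, hWopen, hW1, hWmul⟩ := exists_open_nhds_one_mul_subset (hV'open.mem_nhds hV'1)
  set W₂ : Set G := W ∩ W⁻¹ with hW₂def
  have hW₂open : IsOpen W₂ := hWopen.inter hWopen.inv
  have hW₂1 : (1:G) ∈ W₂ := ⟨hW1, by simpa using hW1⟩
  have hW₂ : ∀ a ∈ W₂, ∀ b ∈ W₂, a⁻¹ * b ∈ V' := by
    intro a ha b hb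
    exact hWmul (Set.mul_mem_mul (Set.mem_inv.mp ha.2) hb.1)
  obtain ⟨B, hBc, -, hBbasis⟩ := TopologicalSpace.exists_countable_basis G
  -- the "good" basis sets
  set D : Set (Set G) := {U ∈ B | ∀ a ∈ U, ∀ b ∈ U, a⁻¹ * b ∈ V'} with hDdef
  have hDcov : ∀ x : G, ∃ U ∈ D, x ∈ U := by
    intro x
    have hxmem : x ∈ x • W₂ := ⟨1, hW₂1, mul_one x⟩
    obtain ⟨U, hUB, hxU, hUsub⟩ :=
      hBbasis.exists_subset_of_mem_open hxmem (hW₂open.smul x)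
    refine ⟨U, ⟨hUB, ?_⟩, hxU⟩
    intro a ha b hb
    obtain ⟨a', ha', rfl⟩ := hUsub ha
    obtain ⟨b', hb', rfl⟩ := hUsub hb
    have : (x * a')⁻¹ * (x * b') = a'⁻¹ * b' := by group
    simp only [smul_eq_mul]
    rw [this]
    exact hW₂ a' ha' b' hb'
  have hDc : D.Countable := hBc.mono (Set.sep_subset _ _)
  have hDne : D.Nonempty := by
    obtain ⟨U, hU, -⟩ := hDcov 1; exact ⟨U, hU⟩
  obtain ⟨f, hfD⟩ := hDc.exists_eq_range hDne
  have hfmem : ∀ n, f n ∈ D := fun n => hfD ▸ Set.mem_range_self n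
  have hfopen : ∀ n, IsOpen (f n) := fun n => hBbasis.isOpen (hfmem n).1
  have hfV : ∀ n, ∀ a ∈ f n, ∀ b ∈ f n, a⁻¹ * b ∈ V' := fun n => (hfmem n).2
  have hfcov : ∀ x : G, ∃ n, x ∈ f n := by
    intro x
    obtain ⟨U, hU, hxU⟩ := hDcov x
    obtain ⟨n, rfl⟩ := hfD ▸ hU
    exact ⟨n, hxU⟩
  -- existence of a basis set meeting X
  have hx : ∀ X : {X : CFSp G // X ∈ extHull X₀ ∧ X.1.Nonempty},
      ∃ n, (X.1.1 ∩ f n).Nonempty := by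
    intro X
    obtain ⟨x, hxX⟩ := X.2.2
    obtain ⟨n, hn⟩ := hfcov x
    exact ⟨n, x, hxX, hn⟩
  set s : {X : CFSp G // X ∈ extHull X₀ ∧ X.1.Nonempty} → G :=
    fun X => (Nat.find_spec (hx X)).some with hsdef
  have hsmem : ∀ X, s X ∈ X.1.1 ∩ f (Nat.find (hx X)) :=
    fun X => (Nat.find_spec (hx X)).some_mem
  -- indistinguishability lemma
  have hcl : ∀ (X : {X : CFSp G // X ∈ extHull X₀ ∧ X.1.Nonempty}) (y z : G),
      y ∈ X.1.1 ∩ f (Nat.find (hx X)) → z ∈ X.1.1 ∩ f (Nat.find (hx X)) →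
      z ∈ closure {y} := by
    intro X y z hy hz
    have h1 : y⁻¹ * z ∈ V' := hfV _ _ hy.2 _ hz.2
    have h2 : y⁻¹ * z ∈ closure (X₀⁻¹ * X₀) :=
      X.2.1 (Set.mul_mem_mul (Set.inv_mem_inv.mpr hy.1) hz.1)
    have h3 : y⁻¹ * z ∈ closure {(1:G)} := by
      have := hV'open.inter_closure (s := V') (t := X₀⁻¹ * X₀) ⟨h1, h2⟩
      refine closure_mono ?_ this
      intro g hg
      exact hVdisc ⟨hV'V hg.1, hg.2⟩
    have h4 : closure {y} = y • closure {(1:G)} := by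
      rw [← closure_smul, Set.smul_set_singleton, smul_eq_mul, mul_one]
    rw [h4]
    exact ⟨y⁻¹ * z, h3, by simp⟩
  -- characterization of membership in open sets
  have hchar : ∀ (X : {X : CFSp G // X ∈ extHull X₀ ∧ X.1.Nonempty}) (O : Set G), IsOpen O →
      (s X ∈ O ↔ (X.1.1 ∩ f (Nat.find (hx X)) ∩ O).Nonempty) := by
    intro X O hO
    constructor
    · intro h
      exact ⟨s X, hsmem X, h⟩
    · rintro ⟨z, hz, hzO⟩
      have := hcl X (s X) z (hsmem X) hz
      obtain ⟨w, hwO, hw⟩ := mem_closure_iff.mp this O hO hzO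
      rw [Set.mem_singleton_iff] at hw
      rwa [← hw]
  -- measurability of the basic sets
  have hTm : ∀ (U : Set G), IsOpen U →
      MeasurableSet {C : CFSp G | (C.1 ∩ U).Nonempty} := by
    intro U hU
    have : IsOpen {C : CFSp G | (C.1 ∩ U).Nonempty} :=
      TopologicalSpace.GenerateOpen.basic _ (Or.inr ⟨U, hU, rfl⟩)
    exact this.measurableSet
  have hAm : ∀ (U : Set G), IsOpen U →
      MeasurableSet {X : {X : CFSp G // X ∈ extHull X₀ ∧ X.1.Nonempty} |
        (X.1.1 ∩ U).Nonempty} := by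
    intro U hU
    exact measurable_subtype_coe (hTm U hU)
  refine ⟨s, ?_, fun X => (hsmem X).1⟩
  apply measurable_of_isOpen
  intro O hO
  have hEq : s ⁻¹' O = ⋃ n, ({X : {X : CFSp G // X ∈ extHull X₀ ∧ X.1.Nonempty} |
      Nat.find (hx X) = n} ∩ {X | (X.1.1 ∩ (f n ∩ O)).Nonempty}) := by
    ext X
    simp only [Set.mem_preimage, Set.mem_iUnion, Set.mem_inter_iff, Set.mem_setOf_eq]
    constructor
    · intro h
      refine ⟨Nat.find (hx X), rfl, ?_⟩
      have := (hchar X O hO).mp h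
      rwa [Set.inter_assoc] at this
    · rintro ⟨n, rfl, hne⟩
      apply (hchar X O hO).mpr
      rwa [Set.inter_assoc]
  rw [hEq]
  refine MeasurableSet.iUnion fun n => MeasurableSet.inter ?_ (hAm _ ((hfopen n).inter hO))
  have hfind : {X : {X : CFSp G // X ∈ extHull X₀ ∧ X.1.Nonempty} | Nat.find (hx X) = n} =
      {X | (X.1.1 ∩ f n).Nonempty} ∩ ⋂ m, ⋂ (_ : m < n), {X : {X : CFSp G //
        X ∈ extHull X₀ ∧ X.1.Nonempty} | (X.1.1 ∩ f m).Nonempty}ᶜ := by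
    ext X
    simp [Nat.find_eq_iff]
  rw [hfind]
  exact (hAm _ (hfopen n)).inter
    (MeasurableSet.iInter fun m => MeasurableSet.iInter fun _ => (hAm _ (hfopen m)).compl)
end

section
/- Let G and H be locally compact second countable groups, let X be a compact metric space with a continuous G-action and let ν be a G-invariant ergodic Borel probability measure on X. Let α : G × X → H be a Borel cocycle taking values in a subset A ⊆ H, let B ⊆ H be another subset, and suppose there is a Borel map φ : X → H such that for all g ∈ G and ν-almost every x ∈ X one has φ(gx) ∈ α(g, x)·φ(x)·B. Then there is h ∈ H such that for every neighbourhood V of the identity in H one has φ(x) ∈ A·V·h·B⁻¹ for ν-almost every x ∈ X. -/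
open scoped Pointwise ENNReal NNReal
open MeasureTheory

/-- the cohomology reduction lemma.  If a Borel map `φ : X → H` satisfies
`φ(gx) ∈ α(g,x)·φ(x)·B` a.e. for a Borel cocycle `α` with values in `A`, over an ergodic
invariant probability measure, then there is `h ∈ H` with `φ(x) ∈ A·V·h·B⁻¹` a.e., for every
identity neighbourhood `V` of `H`. -/
theorem statement17 {G H X : Type*}
    [Group G] [TopologicalSpace G] [IsTopologicalGroup G]
    [LocallyCompactSpace G] [SecondCountableTopology G]
    [MeasurableSpace G] [BorelSpace G]
    [Group H] [TopologicalSpace H] [IsTopologicalGroup H]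
    [LocallyCompactSpace H] [SecondCountableTopology H]
    [MeasurableSpace H] [BorelSpace H]
    [MetricSpace X] [CompactSpace X] [MeasurableSpace X] [BorelSpace X]
    [MulAction G X] [ContinuousSMul G X]
    (ν : MeasureTheory.Measure X) [MeasureTheory.IsProbabilityMeasure ν]
    (hinv : ∀ g : G, MeasureTheory.Measure.map (fun x : X => g • x) ν = ν)
    (herg : ∀ s : Set X, MeasurableSet s → (∀ g : G, (fun x : X => g • x) ⁻¹' s = s) →
      ν s = 0 ∨ ν sᶜ = 0)
    (α : G → X → H)
    (hα_meas : Measurable fun p : G × X => α p.1 p.2)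
    (hα_cocycle : ∀ (g h : G) (x : X), α (g * h) x = α g (h • x) * α h x)
    (A B : Set H) (hA : ∀ (g : G) (x : X), α g x ∈ A)
    (φ : X → H) (hφ : Measurable φ)
    (heq : ∀ g : G, ∀ᵐ x ∂ν, φ (g • x) ∈ ({α g x} : Set H) * {φ x} * B) :
    ∃ h : H, ∀ V ∈ nhds (1 : H), ∀ᵐ x ∂ν, φ x ∈ A * V * ({h} : Set H) * B⁻¹ := by
    classical
  -- basic cocycle identities
  have hα1 : ∀ x : X, α 1 x = 1 := by
    intro x
    have h1 := hα_cocycle 1 1 x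
    rw [one_mul, one_smul] at h1
    exact (right_eq_mul.mp h1)
  have hαinv : ∀ (g : G) (x : X), (α g⁻¹ x)⁻¹ = α g (g⁻¹ • x) := by
    intro g x
    have h2 := hα_cocycle g g⁻¹ x
    rw [mul_inv_cancel, hα1] at h2
    exact (eq_inv_of_mul_eq_one_left h2.symm).symm
  -- a point in the support of the pushforward measure
  obtain ⟨h₀, hh⟩ : ∃ h : H, ∀ U : Set H, IsOpen U → h ∈ U → 0 < ν (φ ⁻¹' U) := by
    by_contra hcon
    push_neg at hcon
    obtain ⟨b, hbc, -, hbasis⟩ := TopologicalSpace.exists_countable_basis H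
    set 𝒩 : Set (Set H) := {U | U ∈ b ∧ ν (φ ⁻¹' U) = 0} with h𝒩
    have hcover : (⋃ U ∈ 𝒩, U) = Set.univ := by
      ext y
      simp only [Set.mem_iUnion, Set.mem_univ, iff_true]
      obtain ⟨U, hUopen, hyU, hUnull⟩ := hcon y
      have hUnull' : ν (φ ⁻¹' U) = 0 := le_antisymm hUnull (zero_le)
      obtain ⟨W, hWb, hyW, hWU⟩ := hbasis.mem_nhds_iff.mp (hUopen.mem_nhds hyU)
      exact ⟨W, ⟨hWb, le_antisymm
        (le_trans (measure_mono (Set.preimage_mono hWU)) hUnull'.le) (zero_le)⟩, hyW⟩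
    have hnull : ν (⋃ U ∈ 𝒩, φ ⁻¹' U) = 0 :=
      (measure_biUnion_null_iff (hbc.mono (fun U hU => hU.1))).mpr (fun U hU => hU.2)
    have : ν Set.univ = 0 := by
      rw [← Set.preimage_univ (f := φ), ← hcover]
      simpa [Set.preimage_iUnion] using hnull
    simp at this
  refine ⟨h₀, ?_⟩
  intro V hV
  obtain ⟨V₀, hV₀V, hV₀open, h1V₀⟩ := mem_nhds_iff.mp hV
  -- Haar measure
  set m : Measure G := MeasureTheory.Measure.haar with hm
  have hPo : IsOpen (V₀ * ({h₀} : Set H)) := hV₀open.mul_right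
  have hSo : IsOpen (A * V₀ * ({h₀} : Set H) * B⁻¹) :=
    ((hV₀open.mul_left (s := A)).mul_right).mul_right
  set P : Set X := φ ⁻¹' (V₀ * {h₀}) with hP
  set S : Set X := φ ⁻¹' (A * V₀ * {h₀} * B⁻¹) with hS
  have hPmeas : MeasurableSet P := hφ hPo.measurableSet
  have hSmeas : MeasurableSet S := hφ hSo.measurableSet
  have hcont : Continuous fun p : X × G => p.2⁻¹ • p.1 :=
    continuous_smul.comp ((continuous_snd.inv).prodMk continuous_fst)
  set W : Set (X × G) := (fun p : X × G => p.2⁻¹ • p.1) ⁻¹' P with hW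
  have hWmeas : MeasurableSet W := hcont.measurable hPmeas
  set F : X → ℝ≥0∞ := fun x => m (Prod.mk x ⁻¹' W) with hF
  have hFmeas : Measurable F := measurable_measure_prodMk_left hWmeas
  set E : Set X := {x | 0 < F x} with hE
  have hEmeas : MeasurableSet E := measurableSet_lt measurable_const hFmeas
  -- E is exactly invariant
  have hEinv : ∀ g : G, (fun x : X => g • x) ⁻¹' E = E := by
    intro g
    ext x
    have hset : Prod.mk (g • x) ⁻¹' W = (fun k : G => g⁻¹ * k) ⁻¹' (Prod.mk x ⁻¹' W) := by
      ext k
      simp only [hW, Set.mem_preimage]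
      rw [mul_inv_rev, inv_inv, mul_smul]
    simp only [Set.mem_preimage, hE, Set.mem_setOf_eq, hF, hset,
      measure_preimage_mul]
  -- the implication set
  set N : Set (X × G) := W ∩ {p : X × G | p.1 ∈ Sᶜ} with hN
  have hNmeas : MeasurableSet N := hWmeas.inter (measurable_fst hSmeas.compl)
  have hslice : ∀ g : G, ν ((fun x : X => (x, g)) ⁻¹' N) = 0 := by
    intro g
    have hae := heq g⁻¹
    refine measure_mono_null (fun x hx => ?_)
      (ae_iff.mp hae)
    simp only [hN, hW, Set.mem_inter_iff, Set.mem_preimage, Set.mem_setOf_eq,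
      Set.mem_compl_iff] at hx
    simp only [Set.mem_setOf_eq]
    intro hmem
    apply hx.2
    rw [Set.singleton_mul_singleton] at hmem
    obtain ⟨p, hp, bb, hbb, hpb⟩ := Set.mem_mul.mp hmem
    rw [Set.mem_singleton_iff] at hp
    subst hp
    obtain ⟨v, hv, h', hh', hvh⟩ := Set.mem_mul.mp hx.1
    rw [Set.mem_singleton_iff] at hh'
    rw [hh'] at hvh
    have e1 : α g⁻¹ x * φ x * bb = v * h₀ := by rw [hpb, ← hvh]
    have key : φ x = α g (g⁻¹ • x) * (v * h₀) * bb⁻¹ := by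
      rw [← hαinv g x, ← e1]
      group
    have key' : φ x = α g (g⁻¹ • x) * v * h₀ * bb⁻¹ := by
      rw [key]; group
    show φ x ∈ A * V₀ * {h₀} * B⁻¹
    rw [key']
    exact Set.mul_mem_mul (Set.mul_mem_mul (Set.mul_mem_mul (hA _ _) hv) rfl)
      (Set.inv_mem_inv.mpr hbb)
  have hprod0 : (ν.prod m) N = 0 := by
    rw [Measure.prod_apply_symm hNmeas]
    simp [hslice]
  have hae1 : ∀ᵐ x ∂ν, m (Prod.mk x ⁻¹' N) = 0 := by
    rw [Measure.prod_apply hNmeas] at hprod0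
    have := (lintegral_eq_zero_iff (measurable_measure_prodMk_left hNmeas)).mp hprod0
    filter_upwards [this] with x hx using hx
  have haeES : ∀ᵐ x ∂ν, x ∈ E → x ∈ S := by
    filter_upwards [hae1] with x hx hxE
    by_contra hxS
    have hEq : Prod.mk x ⁻¹' N = Prod.mk x ⁻¹' W := by
      ext g
      simp [hN, hxS]
    rw [hEq] at hx
    exact absurd hx (ne_of_gt hxE)
  -- positivity of ν E
  obtain ⟨K, hKc, hKnhds⟩ := exists_compact_mem_nhds (1 : G)
  set O : Set G := interior K with hO
  have hOmeas : MeasurableSet O := isOpen_interior.measurableSet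
  have hmK : 0 < m O :=
    isOpen_interior.measure_pos m ⟨1, mem_interior_iff_mem_nhds.mpr hKnhds⟩
  have hνP : 0 < ν P :=
    hh _ hPo (Set.mem_mul.mpr ⟨1, h1V₀, h₀, rfl, one_mul h₀⟩)
  set N₂ : Set (X × G) := W ∩ {p : X × G | p.2 ∈ O} with hN₂
  have hN₂meas : MeasurableSet N₂ := hWmeas.inter (measurable_snd hOmeas)
  have hval : (ν.prod m) N₂ = ν P * m O := by
    rw [Measure.prod_apply_symm hN₂meas]
    have hsl : ∀ g : G, ν ((fun x : X => (x, g)) ⁻¹' N₂)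
        = O.indicator (fun _ => ν P) g := by
      intro g
      by_cases hg : g ∈ O
      · have hsliceeq : ((fun x : X => (x, g)) ⁻¹' N₂) = (fun x : X => g⁻¹ • x) ⁻¹' P := by
          ext x
          simp [hN₂, hW, hg]
        rw [hsliceeq, Set.indicator_of_mem hg]
        calc ν ((fun x : X => g⁻¹ • x) ⁻¹' P)
            = (Measure.map (fun x : X => g⁻¹ • x) ν) P :=
              (Measure.map_apply (continuous_const_smul (g⁻¹ : G)).measurable hPmeas).symm
          _ = ν P := by rw [hinv g⁻¹]
      · have : ((fun x : X => (x, g)) ⁻¹' N₂) = ∅ := by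
          ext x
          simp [hN₂, hg]
        rw [this, Set.indicator_of_notMem hg]
        simp
    simp_rw [hsl]
    rw [lintegral_indicator_const hOmeas]
  rcases herg E hEmeas hEinv with h0 | h1
  · exfalso
    have hacE : ∀ᵐ x ∂ν, x ∉ E := by
      rw [ae_iff]
      simpa using h0
    have hz : ∀ᵐ x ∂ν, m (Prod.mk x ⁻¹' N₂) = 0 := by
      filter_upwards [hacE] with x hx
      have hFx : F x = 0 := by
        by_contra hne
        exact hx (pos_iff_ne_zero.mpr hne)
      refine le_antisymm ?_ (zero_le)
      calc m (Prod.mk x ⁻¹' N₂) ≤ m (Prod.mk x ⁻¹' W) :=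
            measure_mono (fun g hg => hg.1)
        _ = 0 := hFx
    have : (ν.prod m) N₂ = 0 := by
      rw [Measure.prod_apply hN₂meas]
      exact lintegral_eq_zero_iff' (measurable_measure_prodMk_left hN₂meas).aemeasurable
        |>.mpr hz
    rw [hval] at this
    exact absurd this (ENNReal.mul_pos (ne_of_gt hνP) (ne_of_gt hmK)).ne'
  · have haeE : ∀ᵐ x ∂ν, x ∈ E := by
      rw [ae_iff]
      exact h1
    filter_upwards [haeE, haeES] with x hx1 hx2
    have hxS : φ x ∈ A * V₀ * {h₀} * B⁻¹ := hx2 hx1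
    exact Set.mul_subset_mul_right (Set.mul_subset_mul_right
      (Set.mul_subset_mul_left hV₀V)) hxS
end

section
/- Let Λ be an approximate subgroup of some group, let Λ^∞ be the subgroup it generates, let (π, ℋ_π) be a unitary representation of Λ^∞ on a Hilbert space ℋ_π, and let ξ ∈ ℋ_π. The following are equivalent: (1) for every δ > 0 there is an approximate subgroup Λ(δ, ξ) contained in and commensurable to Λ² such that ‖π(λ)ξ − ξ‖ < δ for all λ ∈ Λ(δ, ξ); (2) the set π(Λ)ξ = {π(λ)ξ : λ ∈ Λ} is totally bounded in ℋ_π; (3) there is a closed π-invariant subspace ℋ_σ ⊆ ℋ_π containing ξ such that, denoting by σ the restriction of π to ℋ_σ, the set σ(Λ) is relatively compact in the unitary group U(ℋ_σ) with the strong operator topology. -/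
open scoped Pointwise ENNReal NNReal
open MeasureTheory

set_option linter.unusedSectionVars false
set_option maxHeartbeats 1000000
open Filter Topology
set_option linter.unusedSectionVars false
set_option maxHeartbeats 1000000


section
variable {Γ : Type*} [Group Γ] {Λ : Set Γ}
variable {E : Type*} [NormedAddCommGroup E] [InnerProductSpace ℂ E] [CompleteSpace E]

lemma symΛ (hs : Λ⁻¹ = Λ) {l : Γ} (hl : l ∈ Λ) : l⁻¹ ∈ Λ := by
  rw [← hs]; exact Set.inv_mem_inv.2 hl

lemma pi_norm (π : Subgroup.closure Λ →* (E ≃ₗᵢ[ℂ] E)) (γ : Subgroup.closure Λ) (a b : E) :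
    ‖π γ a - π γ b‖ = ‖a - b‖ := by rw [← map_sub, (π γ).norm_map]

lemma pi_mul (π : Subgroup.closure Λ →* (E ≃ₗᵢ[ℂ] E)) (γ γ' : Subgroup.closure Λ) (v : E) :
    π (γ * γ') v = π γ (π γ' v) := by rw [map_mul]; rfl

lemma tb_finite_image (π : Subgroup.closure Λ →* (E ≃ₗᵢ[ℂ] E)) {s : Set E}
    (hs : TotallyBounded s) {F : Set Γ} (hF : F.Finite) :
    TotallyBounded {v : E | ∃ γ : Subgroup.closure Λ, (γ : Γ) ∈ F ∧ ∃ y ∈ s, π γ y = v} := by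
  have hT : {γ : Subgroup.closure Λ | (γ : Γ) ∈ F}.Finite :=
    hF.preimage Subtype.coe_injective.injOn
  have heq : {v : E | ∃ γ : Subgroup.closure Λ, (γ : Γ) ∈ F ∧ ∃ y ∈ s, π γ y = v} =
      ⋃ γ ∈ {γ : Subgroup.closure Λ | (γ : Γ) ∈ F}, (π γ) '' s := by
    ext v
    simp only [Set.mem_setOf_eq, Set.mem_iUnion, Set.mem_image, exists_prop]
  rw [heq, totallyBounded_biUnion hT]
  exact fun γ _ => hs.image (π γ).isometry.uniformContinuous

lemma exists_translates (hΛ : IsApproxSubgroup Λ) {g : Γ} (hg : g ∈ Subgroup.closure Λ) :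
    ∃ F : Set Γ, F.Finite ∧ (∀ l ∈ Λ, ∃ f ∈ F, f⁻¹ * (l * g) ∈ Λ) ∧
      (∀ l ∈ Λ, ∃ f ∈ F, (g * l) * f⁻¹ ∈ Λ) := by
  obtain ⟨hone, hsym, F₂, hF₂fin, hF₂⟩ := hΛ
  induction hg using Subgroup.closure_induction with
  | mem x hx =>
    refine ⟨F₂ ∪ F₂⁻¹, hF₂fin.union hF₂fin.inv, ?_, ?_⟩
    · intro l hl
      obtain ⟨f, hf, μ, hμ, hfμ⟩ := hF₂ ⟨l, hl, x, hx, rfl⟩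
      have hfμ' : f * μ = l * x := hfμ
      refine ⟨f, Set.mem_union_left _ hf, ?_⟩
      have : f⁻¹ * (l * x) = μ := by rw [← hfμ']; group
      rwa [this]
    · intro l hl
      obtain ⟨f, hf, μ, hμ, hfμ⟩ := hF₂ ⟨l⁻¹, symΛ hsym hl, x⁻¹, symΛ hsym hx, rfl⟩
      have hfμ' : f * μ = l⁻¹ * x⁻¹ := hfμ
      refine ⟨f⁻¹, Set.mem_union_right _ (Set.inv_mem_inv.2 hf), ?_⟩
      have : (x * l) * (f⁻¹)⁻¹ = μ⁻¹ := by
        have h1 : x * l = (l⁻¹ * x⁻¹)⁻¹ := by group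
        rw [h1, ← hfμ']; group
      rw [this]; exact symΛ hsym hμ
  | one =>
    refine ⟨{1}, Set.finite_singleton _, ?_, ?_⟩
    · intro l hl; exact ⟨1, rfl, by simpa using hl⟩
    · intro l hl; exact ⟨1, rfl, by simpa using hl⟩
  | mul x y hx hy ihx ihy =>
    obtain ⟨Fx, hFxfin, hx1, hx2⟩ := ihx
    obtain ⟨Fy, hFyfin, hy1, hy2⟩ := ihy
    refine ⟨Fx * Fy, hFxfin.mul hFyfin, ?_, ?_⟩
    · intro l hl
      obtain ⟨f, hf, hμ⟩ := hx1 l hl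
      obtain ⟨f', hf', hμ'⟩ := hy1 _ hμ
      refine ⟨f * f', Set.mul_mem_mul hf hf', ?_⟩
      have : (f * f')⁻¹ * (l * (x * y)) = f'⁻¹ * ((f⁻¹ * (l * x)) * y) := by group
      rwa [this]
    · intro l hl
      obtain ⟨f, hf, hν⟩ := hy2 l hl
      obtain ⟨f', hf', hν'⟩ := hx2 _ hν
      refine ⟨f' * f, Set.mul_mem_mul hf' hf, ?_⟩
      have : ((x * y) * l) * (f' * f)⁻¹ = (x * ((y * l) * f⁻¹)) * f'⁻¹ := by group
      rwa [this]
  | inv x hx ihx =>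
    obtain ⟨Fx, hFxfin, h1, h2⟩ := ihx
    refine ⟨Fx⁻¹, hFxfin.inv, ?_, ?_⟩
    · intro l hl
      obtain ⟨f, hf, hμ⟩ := h2 l⁻¹ (symΛ hsym hl)
      refine ⟨f⁻¹, Set.inv_mem_inv.2 hf, ?_⟩
      have : (f⁻¹)⁻¹ * (l * x⁻¹) = ((x * l⁻¹) * f⁻¹)⁻¹ := by group
      rw [this]; exact symΛ hsym hμ
    · intro l hl
      obtain ⟨f, hf, hμ⟩ := h1 l⁻¹ (symΛ hsym hl)
      refine ⟨f⁻¹, Set.inv_mem_inv.2 hf, ?_⟩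
      have : (x⁻¹ * l) * (f⁻¹)⁻¹ = (f⁻¹ * (l⁻¹ * x))⁻¹ := by group
      rw [this]; exact symΛ hsym hμ
end

section
variable {Γ : Type*} [Group Γ] {Λ : Set Γ}
variable {E : Type*} [NormedAddCommGroup E] [InnerProductSpace ℂ E] [CompleteSpace E]

lemma tb_orbit_elt (hΛ : IsApproxSubgroup Λ) (π : Subgroup.closure Λ →* (E ≃ₗᵢ[ℂ] E)) (ξ : E)
    (htb : TotallyBounded {v : E | ∃ γ : Subgroup.closure Λ, (γ : Γ) ∈ Λ ∧ π γ ξ = v})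
    (γ₀ : Subgroup.closure Λ) :
    TotallyBounded {w : E | ∃ γ : Subgroup.closure Λ, (γ : Γ) ∈ Λ ∧ π γ (π γ₀ ξ) = w} := by
  obtain ⟨F, hFfin, hleft, _⟩ := exists_translates hΛ γ₀.2
  refine (tb_finite_image π htb hFfin).subset ?_
  rintro w ⟨γ, hγ, rfl⟩
  obtain ⟨f, hf, hμ⟩ := hleft (γ : Γ) hγ
  set μ : Γ := f⁻¹ * ((γ : Γ) * (γ₀ : Γ)) with hμdef
  set γμ : Subgroup.closure Λ := ⟨μ, Subgroup.subset_closure hμ⟩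
  set γf : Subgroup.closure Λ := γ * γ₀ * γμ⁻¹ with hγfdef
  have hγfc : (γf : Γ) = f := by
    simp only [hγfdef, Subgroup.coe_mul, InvMemClass.coe_inv]
    show (γ : Γ) * (γ₀ : Γ) * μ⁻¹ = f
    rw [hμdef]; group
  refine ⟨γf, by rw [hγfc]; exact hf, π γμ ξ, ⟨γμ, hμ, rfl⟩, ?_⟩
  rw [← pi_mul, ← pi_mul]
  congr 1
  rw [hγfdef]; group

lemma tb_orbit_all (hΛ : IsApproxSubgroup Λ) (π : Subgroup.closure Λ →* (E ≃ₗᵢ[ℂ] E)) (ξ : E)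
    (htb : TotallyBounded {v : E | ∃ γ : Subgroup.closure Λ, (γ : Γ) ∈ Λ ∧ π γ ξ = v})
    {v : E}
    (hv : v ∈ closure ((Submodule.span ℂ
      {v : E | ∃ γ : Subgroup.closure Λ, π γ ξ = v} : Submodule ℂ E) : Set E)) :
    TotallyBounded {w : E | ∃ γ : Subgroup.closure Λ, (γ : Γ) ∈ Λ ∧ π γ v = w} := by
  -- first: span elements
  have hspan : ∀ x ∈ (Submodule.span ℂ
      {v : E | ∃ γ : Subgroup.closure Λ, π γ ξ = v} : Submodule ℂ E),
      TotallyBounded {w : E | ∃ γ : Subgroup.closure Λ, (γ : Γ) ∈ Λ ∧ π γ x = w} := by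
    intro x hx
    induction hx using Submodule.span_induction with
    | mem x hx =>
      obtain ⟨γ₀, rfl⟩ := hx
      exact tb_orbit_elt hΛ π ξ htb γ₀
    | zero =>
      refine (totallyBounded_singleton (0 : E)).subset ?_
      rintro w ⟨γ, _, rfl⟩
      simp [map_zero]
    | add x y hx hy ihx ihy =>
      rw [Metric.totallyBounded_iff] at ihx ihy ⊢
      intro ε hε
      obtain ⟨t₁, ht₁fin, ht₁⟩ := ihx (ε/2) (by linarith)
      obtain ⟨t₂, ht₂fin, ht₂⟩ := ihy (ε/2) (by linarith)
      refine ⟨Set.image2 (· + ·) t₁ t₂, ht₁fin.image2 _ ht₂fin, ?_⟩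
      rintro w ⟨γ, hγ, rfl⟩
      have h1 : π γ x ∈ ⋃ y₁ ∈ t₁, Metric.ball y₁ (ε/2) := ht₁ ⟨γ, hγ, rfl⟩
      have h2 : π γ y ∈ ⋃ y₂ ∈ t₂, Metric.ball y₂ (ε/2) := ht₂ ⟨γ, hγ, rfl⟩
      rw [Set.mem_iUnion₂] at h1 h2
      obtain ⟨y₁, hy₁, hb₁⟩ := h1
      obtain ⟨y₂, hy₂, hb₂⟩ := h2
      rw [Set.mem_iUnion₂]
      refine ⟨y₁ + y₂, Set.mem_image2_of_mem hy₁ hy₂, ?_⟩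
      rw [Metric.mem_ball] at hb₁ hb₂ ⊢
      calc dist (π γ (x + y)) (y₁ + y₂) = dist (π γ x + π γ y) (y₁ + y₂) := by rw [map_add]
        _ ≤ dist (π γ x) y₁ + dist (π γ y) y₂ := dist_add_add_le _ _ _ _
        _ < ε/2 + ε/2 := add_lt_add hb₁ hb₂
        _ = ε := by ring
    | smul a x hx ihx =>
      refine (ihx.image (uniformContinuous_const_smul a)).subset ?_
      rintro w ⟨γ, hγ, rfl⟩
      exact ⟨π γ x, ⟨γ, hγ, rfl⟩, by rw [_root_.map_smul]⟩
  -- then: closure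
  rw [Metric.totallyBounded_iff]
  intro ε hε
  obtain ⟨w, hw, hdist⟩ := Metric.mem_closure_iff.1 hv (ε/2) (by linarith)
  obtain ⟨t, htfin, ht⟩ := Metric.totallyBounded_iff.1 (hspan w hw) (ε/2) (by linarith)
  refine ⟨t, htfin, ?_⟩
  rintro u ⟨γ, hγ, rfl⟩
  have h1 : π γ w ∈ ⋃ y ∈ t, Metric.ball y (ε/2) := ht ⟨γ, hγ, rfl⟩
  rw [Set.mem_iUnion₂] at h1
  obtain ⟨y, hy, hb⟩ := h1
  rw [Set.mem_iUnion₂]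
  refine ⟨y, hy, Metric.mem_ball.2 ?_⟩
  calc dist (π γ v) y ≤ dist (π γ v) (π γ w) + dist (π γ w) y := dist_triangle _ _ _
    _ < ε/2 + ε/2 := add_lt_add (by rw [dist_eq_norm, pi_norm, ← dist_eq_norm]; exact hdist)
        (Metric.mem_ball.1 hb)
    _ = ε := by ring
end

section
variable {Γ : Type*} [Group Γ] {Λ : Set Γ}
variable {E : Type*} [NormedAddCommGroup E] [InnerProductSpace ℂ E] [CompleteSpace E]

lemma pi_mul' (π : Subgroup.closure Λ →* (E ≃ₗᵢ[ℂ] E)) (γ γ' : Subgroup.closure Λ) (v : E) :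
    π (γ * γ') v = π γ (π γ' v) := by rw [map_mul]; rfl

/-- Restriction of a unitary representation to an invariant closed subspace. -/
noncomputable def restrictRep (π : Subgroup.closure Λ →* (E ≃ₗᵢ[ℂ] E)) (S : Submodule ℂ E)
    (hinv : ∀ (γ : Subgroup.closure Λ) (v : E), v ∈ S → π γ v ∈ S) :
    Subgroup.closure Λ →* (↥S ≃ₗᵢ[ℂ] ↥S) where
  toFun γ :=
    { toLinearEquiv :=
        { toFun := fun v => ⟨π γ (v : E), hinv γ _ v.2⟩
          map_add' := fun u v => Subtype.ext (by simp [map_add])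
          map_smul' := fun a v => Subtype.ext (by simp [_root_.map_smul])
          invFun := fun v => ⟨π γ⁻¹ (v : E), hinv γ⁻¹ _ v.2⟩
          left_inv := fun v => Subtype.ext (by
            show π γ⁻¹ (π γ (v : E)) = (v : E)
            rw [← pi_mul', inv_mul_cancel, map_one]; rfl)
          right_inv := fun v => Subtype.ext (by
            show π γ (π γ⁻¹ (v : E)) = (v : E)
            rw [← pi_mul', mul_inv_cancel, map_one]; rfl) }
      norm_map' := fun v => by
        show ‖(⟨π γ (v : E), hinv γ _ v.2⟩ : ↥S)‖ = ‖v‖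
        have h1 : ‖(⟨π γ (v : E), hinv γ _ v.2⟩ : ↥S)‖ = ‖π γ (v : E)‖ := rfl
        have h2 : ‖v‖ = ‖(v : E)‖ := rfl
        rw [h1, h2, (π γ).norm_map] }
  map_one' := by
    apply LinearIsometryEquiv.ext
    intro v
    apply Subtype.ext
    show π 1 (v : E) = (v : E)
    rw [map_one]; rfl
  map_mul' := fun γ γ' => by
    apply LinearIsometryEquiv.ext
    intro v
    apply Subtype.ext
    show π (γ * γ') (v : E) = _
    rw [pi_mul']; rfl
end

section
variable {X : Type*} [NormedAddCommGroup X] [NormedSpace ℂ X]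

lemma limit_surjective {A₀ : Set (X → X)}
    (hA : ∀ g ∈ A₀, ∃ e : X ≃ₗᵢ[ℂ] X, ⇑e = g)
    (hAinv : ∀ g ∈ A₀, ∃ g' ∈ A₀, (∀ x, g (g' x) = x) ∧ (∀ x, g' (g x) = x))
    (hK : IsCompact (closure A₀)) {f : X → X} (hf : f ∈ closure A₀) :
    ∃ h ∈ closure A₀, ∀ v, f (h v) = v := by
  classical
  have hne : (𝓝 f ⊓ 𝓟 A₀).NeBot := mem_closure_iff_clusterPt.1 hf
  set U := Ultrafilter.of (𝓝 f ⊓ 𝓟 A₀) with hUdef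
  have hUle : ↑U ≤ 𝓝 f ⊓ 𝓟 A₀ := Ultrafilter.of_le _
  have hUf : ↑U ≤ 𝓝 f := hUle.trans inf_le_left
  have hUA : A₀ ∈ U := le_principal_iff.1 (hUle.trans inf_le_right)
  set inv' : (X → X) → (X → X) := fun g =>
    if hg : ∃ g' ∈ A₀, (∀ x, g (g' x) = x) ∧ (∀ x, g' (g x) = x) then hg.choose else id
    with hinv'def
  have hinv' : ∀ g ∈ A₀, inv' g ∈ A₀ ∧ (∀ x, g (inv' g x) = x) ∧ (∀ x, inv' g (g x) = x) := by
    intro g hg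
    have hex := hAinv g hg
    rw [hinv'def]
    simp only [dif_pos hex]
    exact ⟨hex.choose_spec.1, hex.choose_spec.2⟩
  have hU'A : A₀ ∈ U.map inv' := by
    rw [Ultrafilter.mem_map]
    exact Filter.mem_of_superset hUA (fun g hg => (hinv' g hg).1)
  have hU'K : ↑(U.map inv') ≤ 𝓟 (closure A₀) :=
    le_principal_iff.2 (Filter.mem_of_superset hU'A subset_closure)
  obtain ⟨h, hhK, hU'h⟩ := hK.ultrafilter_le_nhds _ hU'K
  refine ⟨h, hhK, fun v => ?_⟩
  have ht1 : Tendsto (fun g : X → X => g (h v)) ↑U (𝓝 (f (h v))) :=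
    (((continuous_apply (h v)).tendsto f).comp (hUf : Tendsto id ↑U (𝓝 f)))
  have htinv : Tendsto inv' ↑U (𝓝 h) := hU'h
  have ht2 : Tendsto (fun g => inv' g v) ↑U (𝓝 (h v)) :=
    ((continuous_apply v).tendsto h).comp htinv
  have htD : Tendsto (fun g => dist (f (h v)) (g (h v)) + dist (h v) (inv' g v)) ↑U (𝓝 0) := by
    have d1 : Tendsto (fun g : X → X => dist (f (h v)) (g (h v))) ↑U
        (𝓝 (dist (f (h v)) (f (h v)))) := tendsto_const_nhds.dist ht1
    have d2 : Tendsto (fun g : X → X => dist (h v) (inv' g v)) ↑U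
        (𝓝 (dist (h v) (h v))) := tendsto_const_nhds.dist ht2
    have := d1.add d2
    simpa using this
  have hev : ∀ᶠ g in (↑U : Filter (X → X)),
      dist (f (h v)) v ≤ dist (f (h v)) (g (h v)) + dist (h v) (inv' g v) := by
    have : ∀ᶠ g in (↑U : Filter (X → X)), g ∈ A₀ := hUA
    refine this.mono fun g hg => ?_
    obtain ⟨e, he⟩ := hA g hg
    obtain ⟨_, hgr, _⟩ := hinv' g hg
    have hiso : dist (g (h v)) v = dist (h v) (inv' g v) := by
      calc dist (g (h v)) v = dist (g (h v)) (g (inv' g v)) := by rw [hgr v]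
        _ = dist (h v) (inv' g v) := by rw [← he]; exact e.dist_map _ _
    calc dist (f (h v)) v ≤ dist (f (h v)) (g (h v)) + dist (g (h v)) v := dist_triangle _ _ _
      _ = dist (f (h v)) (g (h v)) + dist (h v) (inv' g v) := by rw [hiso]
  have hle : dist (f (h v)) v ≤ 0 := ge_of_tendsto htD hev
  have := le_antisymm hle dist_nonneg
  rwa [dist_eq_zero] at this

lemma limit_equiv {A₀ : Set (X → X)}
    (hA : ∀ g ∈ A₀, ∃ e : X ≃ₗᵢ[ℂ] X, ⇑e = g)
    (hAinv : ∀ g ∈ A₀, ∃ g' ∈ A₀, (∀ x, g (g' x) = x) ∧ (∀ x, g' (g x) = x))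
    (hK : IsCompact (closure A₀)) {f : X → X} (hf : f ∈ closure A₀) :
    ∃ e : X ≃ₗᵢ[ℂ] X, ⇑e = f := by
  have hLclosed : IsClosed {g : X → X | (∀ u v, g (u + v) = g u + g v) ∧
      (∀ (a : ℂ) (u : X), g (a • u) = a • g u) ∧ (∀ u, ‖g u‖ = ‖u‖)} := by
    have h1 : IsClosed {g : X → X | ∀ u v, g (u + v) = g u + g v} := by
      rw [Set.setOf_forall]
      refine isClosed_iInter fun u => ?_
      rw [Set.setOf_forall]
      refine isClosed_iInter fun v => ?_
      exact isClosed_eq (continuous_apply (u + v)) ((continuous_apply u).add (continuous_apply v))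
    have h2 : IsClosed {g : X → X | ∀ (a : ℂ) (u : X), g (a • u) = a • g u} := by
      rw [Set.setOf_forall]
      refine isClosed_iInter fun a => ?_
      rw [Set.setOf_forall]
      refine isClosed_iInter fun u => ?_
      exact isClosed_eq (continuous_apply (a • u)) ((continuous_apply u).const_smul a)
    have h3 : IsClosed {g : X → X | ∀ u, ‖g u‖ = ‖u‖} := by
      rw [Set.setOf_forall]
      refine isClosed_iInter fun u => ?_
      exact isClosed_eq (continuous_apply u).norm continuous_const
    exact h1.inter (h2.inter h3)
  have hL : closure A₀ ⊆ {g : X → X | (∀ u v, g (u + v) = g u + g v) ∧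
      (∀ (a : ℂ) (u : X), g (a • u) = a • g u) ∧ (∀ u, ‖g u‖ = ‖u‖)} := by
    refine closure_minimal ?_ hLclosed
    rintro g hg
    obtain ⟨e, rfl⟩ := hA g hg
    exact ⟨fun u v => e.map_add u v, fun a u => e.map_smul a u, fun u => e.norm_map u⟩
  obtain ⟨hadd, hsmul, hnorm⟩ := hL hf
  obtain ⟨h, _, hfh⟩ := limit_surjective hA hAinv hK hf
  set lin : X →ₗ[ℂ] X := { toFun := f, map_add' := hadd, map_smul' := hsmul } with hlindef
  have hinj : Function.Injective lin := by
    intro u u' huu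
    have hsub : f (u - u') = f u - f u' := map_sub lin u u'
    have : ‖u - u'‖ = 0 := by
      rw [← hnorm (u - u'), hsub]
      show ‖f u - f u'‖ = 0
      rw [show f u = lin u from rfl, show f u' = lin u' from rfl, huu, sub_self, norm_zero]
    rw [norm_eq_zero, sub_eq_zero] at this
    exact this
  have hsurj : Function.Surjective lin := fun v => ⟨h v, hfh v⟩
  exact ⟨{ toLinearEquiv := LinearEquiv.ofBijective lin ⟨hinj, hsurj⟩, norm_map' := hnorm }, rfl⟩
end

section
variable {Γ : Type*} [Group Γ] {Λ : Set Γ}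
variable {E : Type*} [NormedAddCommGroup E] [InnerProductSpace ℂ E] [CompleteSpace E]

lemma sq_sub_closure {Γ : Type*} [Group Γ] {Λ : Set Γ} :
    Λ * Λ ⊆ (Subgroup.closure Λ : Set Γ) := by
  rintro g ⟨a, ha, b, hb, rfl⟩
  exact mul_mem (Subgroup.subset_closure ha) (Subgroup.subset_closure hb)

lemma part1 (hΛ : IsApproxSubgroup Λ) (π : Subgroup.closure Λ →* (E ≃ₗᵢ[ℂ] E)) (ξ : E) :
    (∀ δ > (0 : ℝ), ∃ Λδ : Set Γ, IsApproxSubgroup Λδ ∧ Λδ ⊆ Λ * Λ ∧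
        AreCommensurable Λδ (Λ * Λ) ∧
        ∀ γ : Subgroup.closure Λ, (γ : Γ) ∈ Λδ → ‖π γ ξ - ξ‖ < δ) ↔
      TotallyBounded {v : E | ∃ γ : Subgroup.closure Λ, (γ : Γ) ∈ Λ ∧ π γ ξ = v} := by
  obtain ⟨hone, hsym, F₂, hF₂fin, hF₂⟩ := hΛ
  constructor
  · intro h
    rw [Metric.totallyBounded_iff]
    intro ε hε
    obtain ⟨Λε, hΛε, hsub, ⟨F, hFfin, _, hF2⟩, hnorm⟩ := h ε hε
    refine ⟨(fun γ : Subgroup.closure Λ => π γ ξ) '' {γ | (γ : Γ) ∈ F},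
      ((hFfin.preimage (Subtype.coe_injective.injOn)).image _), ?_⟩
    rintro v ⟨γ, hγΛ, rfl⟩
    have hγ2 : (γ : Γ) ∈ F * Λε := hF2 ⟨γ, hγΛ, 1, hone, mul_one _⟩
    obtain ⟨f, hf, μ, hμ, hfμ⟩ := hγ2
    have hμG : μ ∈ Subgroup.closure Λ := sq_sub_closure (hsub hμ)
    set γμ : Subgroup.closure Λ := ⟨μ, hμG⟩
    set γf := γ * γμ⁻¹ with hγfdef
    have hγf : (γf : Γ) = f := by
      simp only [hγfdef, Subgroup.coe_mul, InvMemClass.coe_inv]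
      rw [← hfμ]; exact mul_inv_cancel_right f μ
    have hmem : π γf ξ ∈ (fun γ : Subgroup.closure Λ => π γ ξ) '' {γ | (γ : Γ) ∈ F} :=
      ⟨γf, by rw [Set.mem_setOf_eq, hγf]; exact hf, rfl⟩
    rw [Set.mem_iUnion₂]
    refine ⟨π γf ξ, hmem, ?_⟩
    have hcomp : γ = γf * γμ := by
      apply Subtype.ext
      simp only [Subgroup.coe_mul, hγf]
      exact hfμ.symm
    rw [Metric.mem_ball, dist_eq_norm, hcomp, pi_mul, pi_norm]
    exact hnorm γμ hμ
  · intro htb δ hδ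
    obtain ⟨t, htfin, hcover⟩ := Metric.totallyBounded_iff.1 htb (δ/2) (by linarith)
    set t' : Set E := {y ∈ t | ∃ γ : Subgroup.closure Λ, (γ : Γ) ∈ Λ ∧ dist (π γ ξ) y < δ/2}
      with ht'def
    have ht'fin : t'.Finite := htfin.subset (Set.sep_subset _ _)
    have hch : ∀ y ∈ t', ∃ γ : Subgroup.closure Λ, (γ : Γ) ∈ Λ ∧ dist (π γ ξ) y < δ/2 :=
      fun y hy => hy.2
    choose! r hr1 hr2 using hch
    set F₀ : Set Γ := (fun y => ((r y : Subgroup.closure Λ) : Γ)) '' t' with hF₀def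
    have hF₀fin : F₀.Finite := ht'fin.image _
    set Λδ : Set Γ := {g | g ∈ Λ * Λ ∧ ∃ γ : Subgroup.closure Λ, (γ : Γ) = g ∧ ‖π γ ξ - ξ‖ < δ}
      with hΛδdef
    have hΛδsub : Λδ ⊆ Λ * Λ := fun g hg => hg.1
    -- syndeticity
    have hsynd : Λ ⊆ F₀ * Λδ := by
      intro l hl
      set γl : Subgroup.closure Λ := ⟨l, Subgroup.subset_closure hl⟩
      have : π γl ξ ∈ ⋃ y ∈ t, Metric.ball y (δ/2) := hcover ⟨γl, hl, rfl⟩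
      rw [Set.mem_iUnion₂] at this
      obtain ⟨y, hyt, hyb⟩ := this
      have hyt' : y ∈ t' := ⟨hyt, γl, hl, Metric.mem_ball.1 hyb⟩
      have hfΛ : ((r y : Subgroup.closure Λ) : Γ) ∈ Λ := hr1 y hyt'
      set γμ := (r y)⁻¹ * γl with hγμdef
      have hμmem : (γμ : Γ) ∈ Λδ := by
        refine ⟨⟨(↑(r y))⁻¹, symΛ hsym hfΛ, l, hl, rfl⟩, γμ, rfl, ?_⟩
        have hc : π (r y) (π γμ ξ) = π γl ξ := by
          rw [← pi_mul]; congr 1; rw [hγμdef]; group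
        have : ‖π γμ ξ - ξ‖ = ‖π γl ξ - π (r y) ξ‖ := by
          rw [← pi_norm π (r y), hc]
        rw [this, ← dist_eq_norm]
        calc dist (π γl ξ) (π (r y) ξ) ≤ dist (π γl ξ) y + dist y (π (r y) ξ) :=
              dist_triangle _ _ _
          _ < δ/2 + δ/2 := by
              refine add_lt_add (Metric.mem_ball.1 hyb) ?_
              rw [dist_comm]; exact hr2 y hyt'
          _ = δ := by ring
      refine ⟨_, ⟨y, hyt', rfl⟩, _, hμmem, ?_⟩
      show (↑(r y) : Γ) * ↑γμ = l
      simp only [hγμdef, Subgroup.coe_mul, InvMemClass.coe_inv]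
      group
      rfl
    -- symmetric
    have hΛδsym : Λδ⁻¹ = Λδ := by
      have key : ∀ g ∈ Λδ, g⁻¹ ∈ Λδ := by
        rintro g ⟨hg2, γ, hγg, hγn⟩
        refine ⟨?_, γ⁻¹, by rw [InvMemClass.coe_inv, hγg], ?_⟩
        · have : g⁻¹ ∈ (Λ * Λ)⁻¹ := Set.inv_mem_inv.2 hg2
          rwa [mul_inv_rev, hsym] at this
        · have h1 : π γ (π γ⁻¹ ξ) = ξ := by
            rw [← pi_mul, mul_inv_cancel, map_one]; rfl
          calc ‖π γ⁻¹ ξ - ξ‖ = ‖π γ (π γ⁻¹ ξ) - π γ ξ‖ := (pi_norm π γ _ _).symm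
            _ = ‖π γ ξ - ξ‖ := by rw [h1, norm_sub_rev]
            _ < δ := hγn
      apply Set.Subset.antisymm
      · intro g hg
        have := key g⁻¹ (Set.mem_inv.1 hg)
        rwa [inv_inv] at this
      · intro g hg
        rw [Set.mem_inv]
        exact key g hg
    have hΛδone : (1 : Γ) ∈ Λδ := by
      refine ⟨⟨1, hone, 1, hone, mul_one _⟩, 1, rfl, ?_⟩
      rw [map_one]
      simpa using hδ
    -- approximate subgroup
    have hsq : Λδ * Λδ ⊆ ((F₂ * (F₂ * F₂)) * F₀) * Λδ := by
      have h4 : (Λ * Λ) * (Λ * Λ) ⊆ (F₂ * (F₂ * F₂)) * Λ := by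
        calc (Λ * Λ) * (Λ * Λ) ⊆ (F₂ * Λ) * (Λ * Λ) := Set.mul_subset_mul_right hF₂
          _ = F₂ * ((Λ * Λ) * Λ) := by rw [mul_assoc, mul_assoc]
          _ ⊆ F₂ * ((F₂ * Λ) * Λ) :=
              Set.mul_subset_mul_left (Set.mul_subset_mul_right hF₂)
          _ = F₂ * (F₂ * (Λ * Λ)) := by rw [mul_assoc]
          _ ⊆ F₂ * (F₂ * (F₂ * Λ)) :=
              Set.mul_subset_mul_left (Set.mul_subset_mul_left hF₂)
          _ = (F₂ * (F₂ * F₂)) * Λ := by rw [← mul_assoc, ← mul_assoc, mul_assoc F₂ F₂ F₂]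
      calc Λδ * Λδ ⊆ (Λ * Λ) * (Λ * Λ) := Set.mul_subset_mul hΛδsub hΛδsub
        _ ⊆ (F₂ * (F₂ * F₂)) * Λ := h4
        _ ⊆ (F₂ * (F₂ * F₂)) * (F₀ * Λδ) := Set.mul_subset_mul_left hsynd
        _ = ((F₂ * (F₂ * F₂)) * F₀) * Λδ := by simp only [mul_assoc]
    refine ⟨Λδ, ⟨hΛδone, hΛδsym, (F₂ * (F₂ * F₂)) * F₀,
        ((hF₂fin.mul (hF₂fin.mul hF₂fin)).mul hF₀fin), hsq⟩, hΛδsub, ?_, ?_⟩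
    · -- commensurable
      refine ⟨(F₂ * F₀) ∪ {1}, (hF₂fin.mul hF₀fin).union (Set.finite_singleton _), ?_, ?_⟩
      · calc Λδ ⊆ Λ * Λ := hΛδsub
          _ = {1} * (Λ * Λ) := by rw [Set.singleton_one, one_mul]
          _ ⊆ ((F₂ * F₀) ∪ {1}) * (Λ * Λ) :=
              Set.mul_subset_mul_right Set.subset_union_right
      · calc Λ * Λ ⊆ F₂ * Λ := hF₂
          _ ⊆ F₂ * (F₀ * Λδ) := Set.mul_subset_mul_left hsynd
          _ = (F₂ * F₀) * Λδ := by rw [mul_assoc]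
          _ ⊆ ((F₂ * F₀) ∪ {1}) * Λδ := Set.mul_subset_mul_right Set.subset_union_left
    · rintro γ ⟨_, γ', hγ', hn⟩
      have : γ' = γ := Subtype.ext hγ'
      rwa [this] at hn

lemma part2_forward (hΛ : IsApproxSubgroup Λ) (π : Subgroup.closure Λ →* (E ≃ₗᵢ[ℂ] E)) (ξ : E)
    (htb : TotallyBounded {v : E | ∃ γ : Subgroup.closure Λ, (γ : Γ) ∈ Λ ∧ π γ ξ = v}) :
    ∃ S : Submodule ℂ E, IsClosed (S : Set E) ∧ ξ ∈ S ∧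
      ∃ σ : Subgroup.closure Λ →* (↥S ≃ₗᵢ[ℂ] ↥S),
        (∀ (γ : Subgroup.closure Λ) (v : ↥S), ((σ γ v : ↥S) : E) = π γ (v : E)) ∧
        IsCompact (closure {u : {f : ↥S → ↥S // ∃ w : ↥S ≃ₗᵢ[ℂ] ↥S, ⇑w = f} |
          ∃ γ : Subgroup.closure Λ, (γ : Γ) ∈ Λ ∧ ⇑(σ γ) = (u : ↥S → ↥S)}) := by
  classical
  set O : Set E := {v : E | ∃ γ : Subgroup.closure Λ, π γ ξ = v} with hOdef
  set S : Submodule ℂ E := (Submodule.span ℂ O).topologicalClosure with hSdef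
  have hScl : IsClosed (S : Set E) := Submodule.isClosed_topologicalClosure _
  have hξS : ξ ∈ S :=
    Submodule.le_topologicalClosure _ (Submodule.subset_span ⟨1, by rw [map_one]; rfl⟩)
  have hinv : ∀ (γ : Subgroup.closure Λ) (v : E), v ∈ S → π γ v ∈ S := by
    intro γ
    set f : E →ₗ[ℂ] E := ((π γ).toLinearEquiv : E →ₗ[ℂ] E) with hfdef
    have hAcl : IsClosed ((S.comap f : Submodule ℂ E) : Set E) := by
      have : ((S.comap f : Submodule ℂ E) : Set E) = ⇑(π γ) ⁻¹' (S : Set E) := rfl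
      rw [this]
      exact hScl.preimage (π γ).continuous
    have hsub : Submodule.span ℂ O ≤ S.comap f := by
      rw [Submodule.span_le]
      rintro v ⟨γ', rfl⟩
      show π γ (π γ' ξ) ∈ S
      rw [← pi_mul]
      exact Submodule.le_topologicalClosure _ (Submodule.subset_span ⟨γ * γ', rfl⟩)
    have hle := Submodule.topologicalClosure_minimal _ hsub hAcl
    intro v hv
    exact hle hv
  set σ := restrictRep π S hinv with hσdef
  have hcompat : ∀ (γ : Subgroup.closure Λ) (v : ↥S), ((σ γ v : ↥S) : E) = π γ (v : E) :=
    fun γ v => rfl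
  haveI : CompleteSpace ↥S := (hScl.isComplete).completeSpace_coe
  have hσmul : ∀ (γ γ' : Subgroup.closure Λ) (v : ↥S), σ (γ * γ') v = σ γ (σ γ' v) := by
    intro γ γ' v; rw [map_mul]; rfl
  have horb : ∀ v : ↥S,
      TotallyBounded {w : ↥S | ∃ γ : Subgroup.closure Λ, (γ : Γ) ∈ Λ ∧ σ γ v = w} := by
    intro v
    have hvS : (v : E) ∈ closure ((Submodule.span ℂ O : Submodule ℂ E) : Set E) := by
      have hco : (S : Set E) = closure ((Submodule.span ℂ O : Submodule ℂ E) : Set E) :=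
        Submodule.topologicalClosure_coe _
      exact hco ▸ v.2
    have htbE := tb_orbit_all hΛ π ξ htb hvS
    apply (totallyBounded_image_iff isUniformEmbedding_subtype_val.isUniformInducing).1
    refine htbE.subset ?_
    rintro w ⟨u, ⟨γ, hγ, hu⟩, rfl⟩
    exact ⟨γ, hγ, by rw [← hu]; rfl⟩
  set A₀ : Set (↥S → ↥S) :=
    {f | ∃ γ : Subgroup.closure Λ, (γ : Γ) ∈ Λ ∧ ⇑(σ γ) = f} with hA₀def
  set P : Set (↥S → ↥S) :=
    Set.pi Set.univ (fun v : ↥S =>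
      closure {w : ↥S | ∃ γ : Subgroup.closure Λ, (γ : Γ) ∈ Λ ∧ σ γ v = w}) with hPdef
  have hA₀P : A₀ ⊆ P := by
    rintro g ⟨γ, hγ, rfl⟩ v _
    exact subset_closure ⟨γ, hγ, rfl⟩
  have hPcomp : IsCompact P :=
    isCompact_univ_pi fun v =>
      TotallyBounded.isCompact_of_isClosed (horb v).closure isClosed_closure
  have hKsub : closure A₀ ⊆ P := closure_minimal hA₀P hPcomp.isClosed
  have hK : IsCompact (closure A₀) := hPcomp.of_isClosed_subset isClosed_closure hKsub
  have hA : ∀ g ∈ A₀, ∃ e : ↥S ≃ₗᵢ[ℂ] ↥S, ⇑e = g := by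
    rintro g ⟨γ, _, rfl⟩; exact ⟨σ γ, rfl⟩
  have hAinv : ∀ g ∈ A₀, ∃ g' ∈ A₀, (∀ x, g (g' x) = x) ∧ (∀ x, g' (g x) = x) := by
    rintro g ⟨γ, hγ, rfl⟩
    have hγinv : ((γ⁻¹ : Subgroup.closure Λ) : Γ) ∈ Λ := by
      rw [InvMemClass.coe_inv]; exact symΛ hΛ.2.1 hγ
    refine ⟨⇑(σ γ⁻¹), ⟨γ⁻¹, hγinv, rfl⟩, fun x => ?_, fun x => ?_⟩
    · show σ γ (σ γ⁻¹ x) = x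
      rw [← hσmul, mul_inv_cancel, map_one]; rfl
    · show σ γ⁻¹ (σ γ x) = x
      rw [← hσmul, inv_mul_cancel, map_one]; rfl
  refine ⟨S, hScl, hξS, σ, hcompat, ?_⟩
  set A : Set {f : ↥S → ↥S // ∃ w : ↥S ≃ₗᵢ[ℂ] ↥S, ⇑w = f} :=
    {u | ∃ γ : Subgroup.closure Λ, (γ : Γ) ∈ Λ ∧ ⇑(σ γ) = (u : ↥S → ↥S)} with hAdef
  have hval : (Subtype.val '' A : Set (↥S → ↥S)) = A₀ := by
    ext g
    constructor
    · rintro ⟨u, ⟨γ, hγ, hu⟩, rfl⟩; exact ⟨γ, hγ, hu⟩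
    · rintro ⟨γ, hγ, rfl⟩; exact ⟨⟨⇑(σ γ), ⟨σ γ, rfl⟩⟩, ⟨γ, hγ, rfl⟩, rfl⟩
  rw [Topology.IsEmbedding.subtypeVal.isCompact_iff]
  have himg : Subtype.val '' closure A = closure A₀ := by
    apply Set.Subset.antisymm
    · rintro g ⟨u, hu, rfl⟩
      have h2 := closure_subtype.1 hu
      rwa [hval] at h2
    · intro g hg
      obtain ⟨e, he⟩ := limit_equiv hA hAinv hK hg
      refine ⟨⟨g, e, he⟩, ?_, rfl⟩
      rw [closure_subtype, hval]
      exact hg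
  rw [himg]
  exact hK
end

section
variable {Γ : Type*} [Group Γ] {Λ : Set Γ}
variable {E : Type*} [NormedAddCommGroup E] [InnerProductSpace ℂ E] [CompleteSpace E]

lemma part2_backward (π : Subgroup.closure Λ →* (E ≃ₗᵢ[ℂ] E)) (ξ : E)
    (h : ∃ S : Submodule ℂ E, IsClosed (S : Set E) ∧ ξ ∈ S ∧
      ∃ σ : Subgroup.closure Λ →* (↥S ≃ₗᵢ[ℂ] ↥S),
        (∀ (γ : Subgroup.closure Λ) (v : ↥S), ((σ γ v : ↥S) : E) = π γ (v : E)) ∧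
        IsCompact (closure {u : {f : ↥S → ↥S // ∃ w : ↥S ≃ₗᵢ[ℂ] ↥S, ⇑w = f} |
          ∃ γ : Subgroup.closure Λ, (γ : Γ) ∈ Λ ∧ ⇑(σ γ) = (u : ↥S → ↥S)})) :
    TotallyBounded {v : E | ∃ γ : Subgroup.closure Λ, (γ : Γ) ∈ Λ ∧ π γ ξ = v} := by
  obtain ⟨S, hScl, hξS, σ, hcompat, hcomp⟩ := h
  set ξ' : ↥S := ⟨ξ, hξS⟩ with hξ'def
  set ev : {f : ↥S → ↥S // ∃ w : ↥S ≃ₗᵢ[ℂ] ↥S, ⇑w = f} → ↥S :=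
    fun u => (u : ↥S → ↥S) ξ' with hevdef
  have hev : Continuous ev := (continuous_apply ξ').comp continuous_subtype_val
  have himgcomp : IsCompact (ev '' closure {u : {f : ↥S → ↥S // ∃ w : ↥S ≃ₗᵢ[ℂ] ↥S, ⇑w = f} |
      ∃ γ : Subgroup.closure Λ, (γ : Γ) ∈ Λ ∧ ⇑(σ γ) = (u : ↥S → ↥S)}) :=
    hcomp.image hev
  have hOrbS : {w : ↥S | ∃ γ : Subgroup.closure Λ, (γ : Γ) ∈ Λ ∧ σ γ ξ' = w} ⊆
      ev '' closure {u : {f : ↥S → ↥S // ∃ w : ↥S ≃ₗᵢ[ℂ] ↥S, ⇑w = f} |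
        ∃ γ : Subgroup.closure Λ, (γ : Γ) ∈ Λ ∧ ⇑(σ γ) = (u : ↥S → ↥S)} := by
    rintro w ⟨γ, hγ, rfl⟩
    exact ⟨⟨⇑(σ γ), ⟨σ γ, rfl⟩⟩, subset_closure ⟨γ, hγ, rfl⟩, rfl⟩
  have hOrbStb : TotallyBounded {w : ↥S | ∃ γ : Subgroup.closure Λ, (γ : Γ) ∈ Λ ∧ σ γ ξ' = w} :=
    himgcomp.totallyBounded.subset hOrbS
  have himg : {v : E | ∃ γ : Subgroup.closure Λ, (γ : Γ) ∈ Λ ∧ π γ ξ = v} ⊆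
      Subtype.val '' {w : ↥S | ∃ γ : Subgroup.closure Λ, (γ : Γ) ∈ Λ ∧ σ γ ξ' = w} := by
    rintro v ⟨γ, hγ, rfl⟩
    exact ⟨σ γ ξ', ⟨γ, hγ, rfl⟩, hcompat γ ξ'⟩
  exact (hOrbStb.image uniformContinuous_subtype_val).subset himg
end

/-- compactness criterion for the unitary image of an approximate subgroup.
For a unitary representation `π` of the group `Λ^∞` generated by an approximate subgroup `Λ`
and a vector `ξ`, the following are equivalent: (1) approximate invariance of `ξ` along
approximate subgroups commensurable to `Λ²`; (2) total boundedness of the orbit `π(Λ)ξ`;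
(3) existence of a closed invariant subspace containing `ξ` on which the restriction `σ`
satisfies that `σ(Λ)` is relatively compact in the unitary group with the strong operator
topology (realized as the topology of pointwise convergence). -/
theorem statement18 {Γ : Type*} [Group Γ] (Λ : Set Γ) (hΛ : IsApproxSubgroup Λ)
    {E : Type*} [NormedAddCommGroup E] [InnerProductSpace ℂ E] [CompleteSpace E]
    (π : Subgroup.closure Λ →* (E ≃ₗᵢ[ℂ] E)) (ξ : E) :
    ((∀ δ > (0 : ℝ), ∃ Λδ : Set Γ, IsApproxSubgroup Λδ ∧ Λδ ⊆ Λ * Λ ∧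
        AreCommensurable Λδ (Λ * Λ) ∧
        ∀ γ : Subgroup.closure Λ, (γ : Γ) ∈ Λδ → ‖π γ ξ - ξ‖ < δ) ↔
      TotallyBounded {v : E | ∃ γ : Subgroup.closure Λ, (γ : Γ) ∈ Λ ∧ π γ ξ = v}) ∧
    (TotallyBounded {v : E | ∃ γ : Subgroup.closure Λ, (γ : Γ) ∈ Λ ∧ π γ ξ = v} ↔
      ∃ S : Submodule ℂ E, IsClosed (S : Set E) ∧ ξ ∈ S ∧
        ∃ σ : Subgroup.closure Λ →* (↥S ≃ₗᵢ[ℂ] ↥S),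
          (∀ (γ : Subgroup.closure Λ) (v : ↥S), ((σ γ v : ↥S) : E) = π γ (v : E)) ∧
          IsCompact (closure {u : {f : ↥S → ↥S // ∃ w : ↥S ≃ₗᵢ[ℂ] ↥S, ⇑w = f} |
            ∃ γ : Subgroup.closure Λ, (γ : Γ) ∈ Λ ∧ ⇑(σ γ) = (u : ↥S → ↥S)})) := by
  exact ⟨part1 hΛ π ξ, fun htb => part2_forward hΛ π ξ htb, fun h => part2_backward π ξ h⟩
end

section
/- Let Λ be an approximate subgroup of some group that has property (T) (for approximate subgroups), with Kazhdan pair (Q, ε). Then the subgroup Λ^∞ generated by Λ is finitely generated; more precisely, Λ is covered by finitely many left translates of the subgroup Δ generated by Q. -/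
open scoped Pointwise ENNReal NNReal
open MeasureTheory

noncomputable section Statement19Aux

variable {X : Type*}


variable {X : Type*}

lemma memℓp_two_comp_equiv {f : ∀ _ : X, ℂ} (hf : Memℓp f 2) (e : X ≃ X) :
    Memℓp (fun x => f (e x)) 2 := by
  have h2 : 0 < (2 : ℝ≥0∞).toReal := by norm_num
  rw [memℓp_gen_iff h2] at hf ⊢
  exact (Equiv.summable_iff e (f := fun x => ‖f x‖ ^ (2 : ℝ≥0∞).toReal)).2 hf

/-- Permutation of coordinates as a linear isometry equivalence of `ℓ²`. -/
def lpPerm (e : X ≃ X) :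
    lp (fun _ : X => ℂ) 2 ≃ₗᵢ[ℂ] lp (fun _ : X => ℂ) 2 where
  toFun f := ⟨fun x => f (e.symm x), memℓp_two_comp_equiv (lp.memℓp f) e.symm⟩
  invFun f := ⟨fun x => f (e x), memℓp_two_comp_equiv (lp.memℓp f) e⟩
  map_add' f g := by ext x; rfl
  map_smul' c f := by ext x; rfl
  left_inv f := by ext x; simp
  right_inv f := by ext x; simp
  norm_map' f := by
    have h2 : 0 < (2 : ℝ≥0∞).toReal := by norm_num
    rw [lp.norm_eq_tsum_rpow h2, lp.norm_eq_tsum_rpow h2]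
    congr 1
    exact Equiv.tsum_eq e.symm (fun x => ‖f x‖ ^ (2 : ℝ≥0∞).toReal)

@[simp] lemma lpPerm_apply (e : X ≃ X) (f : lp (fun _ : X => ℂ) 2) (x : X) :
    lpPerm e f x = f (e.symm x) := rfl

/-- Permutation representation as a monoid hom into linear isometry equivs. -/
def lpPermHom : Equiv.Perm X →* (lp (fun _ : X => ℂ) 2 ≃ₗᵢ[ℂ] lp (fun _ : X => ℂ) 2) where
  toFun e := lpPerm e
  map_one' := by
    apply LinearIsometryEquiv.ext
    intro f; ext x; rfl
  map_mul' e₁ e₂ := by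
    apply LinearIsometryEquiv.ext
    intro f; ext x; rfl

lemma lpPerm_single [DecidableEq X] (e : X ≃ X) (i : X) (a : ℂ) :
    lpPerm e (lp.single 2 i a) = lp.single 2 (e i) a := by
  ext x
  rw [lpPerm_apply]
  by_cases h : x = e i
  · subst h
    rw [e.symm_apply_apply, lp.single_apply_self, lp.single_apply_self]
  · rw [lp.single_apply_ne _ _ _ (fun hc => h (by rw [← hc, e.apply_symm_apply])),
      lp.single_apply_ne _ _ _ h]


variable {X : Type*}

lemma lp_finite_large (f : lp (fun _ : X => ℂ) 2) {c : ℝ} (hc : 0 < c) :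
    {x : X | c ≤ ‖f x‖}.Finite := by
  have h2 : 0 < (2 : ℝ≥0∞).toReal := by norm_num
  have hs : Summable fun x => ‖f x‖ ^ (2 : ℝ≥0∞).toReal := (memℓp_gen_iff h2).1 (lp.memℓp f)
  have ht := hs.tendsto_cofinite_zero
  have hc2 : (0:ℝ) < c ^ (2 : ℝ≥0∞).toReal := Real.rpow_pos_of_pos hc _
  have hev : ∀ᶠ x in Filter.cofinite, ‖f x‖ ^ (2 : ℝ≥0∞).toReal < c ^ (2 : ℝ≥0∞).toReal :=
    ht (Iio_mem_nhds hc2)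
  rw [Filter.eventually_cofinite] at hev
  refine hev.subset fun x hx => ?_
  simp only [Set.mem_setOf_eq, not_lt] at hx ⊢
  exact Real.rpow_le_rpow hc.le hx h2.le

lemma lp_apply_sub_le (f g : lp (fun _ : X => ℂ) 2) (x : X) :
    ‖f x - g x‖ ≤ ‖f - g‖ := by
  have := lp.norm_apply_le_norm (E := fun _ : X => ℂ) two_ne_zero (f - g) x
  rwa [lp.coeFn_sub, Pi.sub_apply] at this

variable {Γ : Type*} [Group Γ]

lemma translate_lemma {Λ : Set Γ} (hΛ : IsApproxSubgroup Λ) {h : Γ}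
    (hh : h ∈ Subgroup.closure Λ) :
    ∃ C : Set Γ, C.Finite ∧ (∀ c ∈ C, c ∈ Subgroup.closure Λ) ∧
      (∀ l ∈ Λ, ∃ c ∈ C, ∃ m ∈ Λ, l * h = c * m) ∧
      (∀ l ∈ Λ, ∃ c ∈ C, ∃ m ∈ Λ, l * h⁻¹ = c * m) := by
  obtain ⟨h1, hsymm, F, hFfin, hFmul⟩ := hΛ
  have key : ∀ y ∈ Λ, ∀ l ∈ Λ, ∃ c ∈ F ∩ (Subgroup.closure Λ : Set Γ), ∃ m ∈ Λ,
      l * y = c * m := by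
    intro y hy l hl
    have : l * y ∈ F * Λ := hFmul (Set.mul_mem_mul hl hy)
    obtain ⟨c, hc, m, hm, hcm⟩ := this
    have hcm' : c * m = l * y := hcm
    refine ⟨c, ⟨hc, ?_⟩, m, hm, hcm'.symm⟩
    have hce : c = l * y * m⁻¹ := by rw [← hcm']; group
    rw [hce]
    exact mul_mem (mul_mem (Subgroup.subset_closure hl) (Subgroup.subset_closure hy))
      (inv_mem (Subgroup.subset_closure hm))
  induction hh using Subgroup.closure_induction with
  | mem x hx =>
    refine ⟨F ∩ (Subgroup.closure Λ : Set Γ), hFfin.inter_of_left _,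
      fun c hc => hc.2, key x hx, ?_⟩
    have hxinv : x⁻¹ ∈ Λ := by
      rw [← hsymm]; exact Set.inv_mem_inv.2 hx
    exact key x⁻¹ hxinv
  | one =>
    refine ⟨{1}, Set.finite_singleton _,
      fun c hc => by rw [Set.mem_singleton_iff] at hc; subst hc; exact one_mem _,
      fun l hl => ⟨1, rfl, l, hl, by group⟩,
      fun l hl => ⟨1, rfl, l, hl, by group⟩⟩
  | mul x y hx hy ihx ihy =>
    obtain ⟨Cx, hCxf, hCxc, hCx1, hCx2⟩ := ihx
    obtain ⟨Cy, hCyf, hCyc, hCy1, hCy2⟩ := ihy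
    refine ⟨Cx * Cy ∪ Cy * Cx, (hCxf.mul hCyf).union (hCyf.mul hCxf), ?_, ?_, ?_⟩
    · rintro c (hc | hc) <;> obtain ⟨a, ha, b, hb, rfl⟩ := hc
      · exact mul_mem (hCxc a ha) (hCyc b hb)
      · exact mul_mem (hCyc a ha) (hCxc b hb)
    · intro l hl
      obtain ⟨c1, hc1, m1, hm1, e1⟩ := hCx1 l hl
      obtain ⟨c2, hc2, m2, hm2, e2⟩ := hCy1 m1 hm1
      refine ⟨c1 * c2, Or.inl (Set.mul_mem_mul hc1 hc2), m2, hm2, ?_⟩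
      calc l * (x * y) = l * x * y := by group
        _ = c1 * (m1 * y) := by rw [e1]; group
        _ = c1 * (c2 * m2) := by rw [e2]
        _ = c1 * c2 * m2 := by group
    · intro l hl
      obtain ⟨c2, hc2, m2, hm2, e2⟩ := hCy2 l hl
      obtain ⟨c1, hc1, m1, hm1, e1⟩ := hCx2 m2 hm2
      refine ⟨c2 * c1, Or.inr (Set.mul_mem_mul hc2 hc1), m1, hm1, ?_⟩
      calc l * (x * y)⁻¹ = l * y⁻¹ * x⁻¹ := by group
        _ = c2 * (m2 * x⁻¹) := by rw [e2]; group
        _ = c2 * (c1 * m1) := by rw [e1]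
        _ = c2 * c1 * m1 := by group
  | inv x hx ih =>
    obtain ⟨C, hCf, hCc, hC1, hC2⟩ := ih
    exact ⟨C, hCf, hCc, hC2, by simpa using hC1⟩


lemma totallyBounded_biUnion_of_finite {α ι : Type*} [UniformSpace α] {s : Set ι}
    (hs : s.Finite) {f : ι → Set α} (hf : ∀ i ∈ s, TotallyBounded (f i)) :
    TotallyBounded (⋃ i ∈ s, f i) := by
  refine Set.Finite.induction_on_subset (motive := fun u _ => TotallyBounded (⋃ i ∈ u, f i)) _ hs
    (by simp [totallyBounded_empty]) ?_
  intro a u haS _ _ hC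
  rw [Set.biUnion_insert]
  exact (hf a haS).union hC


end Statement19Aux

/-- an approximate subgroup with property (T) (for approximate subgroups), with
Kazhdan pair `(Q, ε)`, generates a finitely generated group; more precisely `Λ` is covered by
finitely many left translates of the subgroup generated by `Q`. -/
theorem statement19 {Γ : Type u} [Group Γ] (Λ : Set Γ) (hΛ : IsApproxSubgroup Λ)
    (Q : Set Γ) (hQΛ : Q ⊆ Λ) (hQfin : Q.Finite) (ε : ℝ) (hε : 0 < ε)
    (hT : ∀ (E : Type u) [NormedAddCommGroup E] [InnerProductSpace ℂ E] [CompleteSpace E]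
      (π : Subgroup.closure Λ →* (E ≃ₗᵢ[ℂ] E)),
      (∃ ξ : E, ‖ξ‖ = 1 ∧ ∀ γ : Subgroup.closure Λ, (γ : Γ) ∈ Q → ‖π γ ξ - ξ‖ < ε) →
      ∃ ξ : E, ‖ξ‖ = 1 ∧
        TotallyBounded {v : E | ∃ γ : Subgroup.closure Λ, (γ : Γ) ∈ Λ ∧ π γ ξ = v}) :
    (Subgroup.closure Λ).FG ∧
    ∃ F : Set Γ, F.Finite ∧ Λ ⊆ F * ((Subgroup.closure Q : Subgroup Γ) : Set Γ) := by
  classical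
  obtain ⟨hΛ1, hΛsymm, -⟩ := id hΛ
  let Δ : Subgroup (Subgroup.closure Λ) := Subgroup.closure {h : Subgroup.closure Λ | (h : Γ) ∈ Q}
  let Xq := (Subgroup.closure Λ) ⧸ Δ
  let π : (Subgroup.closure Λ) →* (lp (fun _ : Xq => ℂ) 2 ≃ₗᵢ[ℂ] lp (fun _ : Xq => ℂ) 2) :=
    lpPermHom.comp (MulAction.toPermHom (Subgroup.closure Λ) Xq)
  have hπ : ∀ (g : Subgroup.closure Λ) (f : lp (fun _ : Xq => ℂ) 2) (x : Xq),
      (π g f) x = f (g⁻¹ • x) := fun g f x => rfl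
  have h2 : 0 < (2 : ℝ≥0∞).toReal := by norm_num
  set x1 : Xq := QuotientGroup.mk (1 : Subgroup.closure Λ) with hx1def
  -- the invariant vector
  have hinv : ∃ ξ₀ : lp (fun _ : Xq => ℂ) 2, ‖ξ₀‖ = 1 ∧
      ∀ γ : Subgroup.closure Λ, (γ : Γ) ∈ Q → ‖π γ ξ₀ - ξ₀‖ < ε := by
    refine ⟨lp.single 2 x1 1, ?_, ?_⟩
    · have := lp.norm_single (E := fun _ : Xq => ℂ) (by norm_num : (0:ℝ≥0∞) < 2) x1 (1 : ℂ)
      simpa using this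
    · intro γ hγ
      have hmem : γ ∈ Δ := Subgroup.subset_closure hγ
      have hsingle : π γ (lp.single 2 x1 1) = lp.single 2 (γ • x1) 1 :=
        lpPerm_single (MulAction.toPermHom (Subgroup.closure Λ) Xq γ) x1 1
      have hx : γ • x1 = x1 := by
        rw [hx1def, MulAction.Quotient.smul_mk]
        refine (QuotientGroup.eq).2 ?_
        simpa using inv_mem hmem
      rw [hsingle, hx, sub_self, norm_zero]
      exact hε
  obtain ⟨ξ, hξ1, hTB⟩ := hT (lp (fun _ : Xq => ℂ) 2) π hinv
  -- a nonzero coordinate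
  have hξne : ∃ x₀ : Xq, ξ x₀ ≠ 0 := by
    by_contra hcon
    push_neg at hcon
    have hz : ξ = 0 := by ext x; simpa using hcon x
    rw [hz, norm_zero] at hξ1
    exact one_ne_zero hξ1.symm
  obtain ⟨x₀, hx₀⟩ := hξne
  set g₀ : Subgroup.closure Λ := Quotient.out x₀ with hg₀def
  set η : lp (fun _ : Xq => ℂ) 2 := π g₀⁻¹ ξ with hηdef
  have hηx1 : η x1 = ξ x₀ := by
    have hkey : g₀ • x1 = x₀ := by
      rw [hx1def, MulAction.Quotient.smul_mk, smul_eq_mul, mul_one]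
      exact QuotientGroup.out_eq' x₀
    rw [hηdef, hπ, inv_inv, hkey]
  -- orbit of η is totally bounded
  obtain ⟨C, hCfin, hCcl, -, hC2⟩ := translate_lemma hΛ g₀.2
  have hOTB : TotallyBounded {v | ∃ γ : Subgroup.closure Λ, (γ : Γ) ∈ Λ ∧ π γ η = v} := by
    have hcov : {v | ∃ γ : Subgroup.closure Λ, (γ : Γ) ∈ Λ ∧ π γ η = v} ⊆
        ⋃ c ∈ (Subtype.val ⁻¹' C : Set (Subgroup.closure Λ)),
          (π c) '' {v | ∃ γ : Subgroup.closure Λ, (γ : Γ) ∈ Λ ∧ π γ ξ = v} := by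
      rintro v ⟨γ, hγ, rfl⟩
      obtain ⟨c, hc, m, hm, he⟩ := hC2 (γ : Γ) hγ
      have hcH : c ∈ Subgroup.closure Λ := hCcl c hc
      have hmH : m ∈ Subgroup.closure Λ := Subgroup.subset_closure hm
      have heH : γ * g₀⁻¹ = (⟨c, hcH⟩ : Subgroup.closure Λ) * ⟨m, hmH⟩ := by
        apply Subtype.ext
        push_cast
        exact he
      refine Set.mem_iUnion₂.2 ⟨⟨c, hcH⟩, hc, π ⟨m, hmH⟩ ξ, ⟨⟨m, hmH⟩, hm, rfl⟩, ?_⟩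
      calc π ⟨c, hcH⟩ (π ⟨m, hmH⟩ ξ) = π ((⟨c, hcH⟩ : Subgroup.closure Λ) * ⟨m, hmH⟩) ξ := by
            rw [map_mul]; rfl
        _ = π (γ * g₀⁻¹) ξ := by rw [heH]
        _ = π γ η := by rw [map_mul, hηdef]; rfl
    refine TotallyBounded.subset hcov ?_
    refine totallyBounded_biUnion_of_finite (hCfin.preimage Subtype.val_injective.injOn) ?_
    intro c _
    exact hTB.image (π c).isometry.uniformContinuous
  -- threshold argument
  set δ : ℝ := ‖η x1‖ with hδdef
  have hδ : 0 < δ := by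
    rw [hδdef, hηx1]
    exact norm_pos_iff.2 hx₀
  obtain ⟨t, htfin, htsub⟩ := Metric.totallyBounded_iff.1 hOTB (δ / 2) (by linarith)
  have hbig : ∀ γ : Subgroup.closure Λ, (γ : Γ) ∈ Λ →
      (QuotientGroup.mk γ : Xq) ∈ ⋃ y ∈ t, {x : Xq | δ / 2 ≤ ‖y x‖} := by
    intro γ hγ
    have hvmem : π γ η ∈ {v | ∃ γ' : Subgroup.closure Λ, (γ' : Γ) ∈ Λ ∧ π γ' η = v} :=
      ⟨γ, hγ, rfl⟩
    obtain ⟨y, hy, hvy⟩ := Set.mem_iUnion₂.1 (htsub hvmem)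
    refine Set.mem_iUnion₂.2 ⟨y, hy, ?_⟩
    have hcoord : (π γ η) (QuotientGroup.mk γ : Xq) = η x1 := by
      rw [hπ]
      rw [MulAction.Quotient.smul_mk, smul_eq_mul, inv_mul_cancel, hx1def]
    have h1 : ‖(π γ η) (QuotientGroup.mk γ : Xq) - y (QuotientGroup.mk γ : Xq)‖ ≤ ‖π γ η - y‖ :=
      lp_apply_sub_le _ _ _
    have h3 : dist (π γ η) y < δ / 2 := Metric.mem_ball.1 hvy
    rw [dist_eq_norm] at h3
    have h5 : ‖(π γ η) (QuotientGroup.mk γ : Xq)‖ - ‖y (QuotientGroup.mk γ : Xq)‖ ≤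
        ‖(π γ η) (QuotientGroup.mk γ : Xq) - y (QuotientGroup.mk γ : Xq)‖ :=
      norm_sub_norm_le _ _
    have h4 : ‖(π γ η) (QuotientGroup.mk γ : Xq)‖ = δ := by rw [hcoord]
    show δ / 2 ≤ ‖y (QuotientGroup.mk γ : Xq)‖
    linarith
  have hImgFin : {x : Xq | ∃ γ : Subgroup.closure Λ, (γ : Γ) ∈ Λ ∧
      (QuotientGroup.mk γ : Xq) = x}.Finite := by
    refine Set.Finite.subset (htfin.biUnion fun y _ => lp_finite_large y (c := δ / 2) (by linarith)) ?_
    rintro x ⟨γ, hγ, rfl⟩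
    exact hbig γ hγ
  -- Δ is carried into the closure of Q
  have hΔQ : ∀ d : Subgroup.closure Λ, d ∈ Δ → (d : Γ) ∈ Subgroup.closure Q := by
    intro d hd
    induction hd using Subgroup.closure_induction with
    | mem x hx => exact Subgroup.subset_closure hx
    | one => simpa using one_mem (Subgroup.closure Q)
    | mul x y hx hy ihx ihy => simpa using mul_mem ihx ihy
    | inv x hx ih => simpa using inv_mem ih
  -- representatives
  set rep : Xq → Γ := fun x => ((Quotient.out x : Subgroup.closure Λ) : Γ) with hrepdef
  set Fset : Set Γ := rep '' {x : Xq | ∃ γ : Subgroup.closure Λ, (γ : Γ) ∈ Λ ∧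
      (QuotientGroup.mk γ : Xq) = x} with hFsetdef
  have hFsetFin : Fset.Finite := hImgFin.image _
  have hcover : ∀ l ∈ Λ, ∃ f ∈ Fset, ∃ d ∈ (Subgroup.closure Q : Subgroup Γ), l = f * d := by
    intro l hl
    set γ : Subgroup.closure Λ := ⟨l, Subgroup.subset_closure hl⟩ with hγdef
    set x : Xq := QuotientGroup.mk γ with hxdef
    have hx : x ∈ {x : Xq | ∃ γ : Subgroup.closure Λ, (γ : Γ) ∈ Λ ∧
        (QuotientGroup.mk γ : Xq) = x} := ⟨γ, hl, rfl⟩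
    have hmkout : (QuotientGroup.mk (Quotient.out x) : Xq) = QuotientGroup.mk γ := by
      rw [QuotientGroup.out_eq' x, hxdef]
    have hd : (Quotient.out x)⁻¹ * γ ∈ Δ := QuotientGroup.eq.1 hmkout
    refine ⟨rep x, Set.mem_image_of_mem _ hx,
      (((Quotient.out x)⁻¹ * γ : Subgroup.closure Λ) : Γ), hΔQ _ hd, ?_⟩
    rw [hrepdef]
    push_cast
    group
    rfl
  refine ⟨?_, Fset, hFsetFin, ?_⟩
  · rw [Subgroup.fg_iff]
    refine ⟨Fset ∪ Q, ?_, hFsetFin.union hQfin⟩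
    apply le_antisymm
    · rw [Subgroup.closure_le]
      rintro z (hz | hz)
      · obtain ⟨x, -, rfl⟩ := hz
        exact (Quotient.out x).2
      · exact Subgroup.subset_closure (hQΛ hz)
    · rw [Subgroup.closure_le]
      intro l hl
      obtain ⟨f, hf, d, hd, rfl⟩ := hcover l hl
      exact mul_mem (Subgroup.subset_closure (Or.inl hf))
        (Subgroup.closure_mono Set.subset_union_right hd)
  · intro l hl
    obtain ⟨f, hf, d, hd, rfl⟩ := hcover l hl
    exact Set.mul_mem_mul hf hd
end
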